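/- arXiv:2408.14263 — 2 statements merged into one kernel-verified Lean document; each statement's English description precedes it below -/
import Mathlib

section
/- Let 𝒜 be a central hyperplane arrangement in a finite-dimensional real vector space V with |𝒜| ≥ 3, assume 𝒜 is indecomposable, let m be a natural number, let Φ : Ch(𝒜)^m → Ch(𝒜) be an admissible map, and fix a chamber c₀ ∈ Ch(𝒜). Then there exists i₀ with 1 ≤ i₀ ≤ m such that the map c ↦ Φ(c₀, …, c₀, c, c₀, …, c₀) (with c placed in the i₀-th coordinate and c₀ in all other coordinates) is the identity map of Ch(𝒜). -/
open Set

section Arrangement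

variable {V : Type*} [NormedAddCommGroup V] [NormedSpace ℝ V]

/-- A (linear) hyperplane: the kernel of a nonzero linear functional. -/
def IsHyperplane (H : Submodule ℝ V) : Prop :=
  ∃ f : V →ₗ[ℝ] ℝ, f ≠ 0 ∧ LinearMap.ker f = H

/-- A central hyperplane arrangement: a finite set of linear hyperplanes. -/
def IsCentralArrangement (𝒜 : Finset (Submodule ℝ V)) : Prop :=
  ∀ H ∈ 𝒜, IsHyperplane H

/-- The complement of the union of the hyperplanes of `𝒜`. -/
def arrComplement (𝒜 : Finset (Submodule ℝ V)) : Set V :=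
  {x | ∀ H ∈ 𝒜, x ∉ H}

/-- The set of chambers of `𝒜`: connected components of the complement. -/
def Chambers (𝒜 : Finset (Submodule ℝ V)) : Set (Set V) :=
  {c | ∃ x ∈ arrComplement 𝒜, c = connectedComponentIn (arrComplement 𝒜) x}

/-- A chamber of `𝒜`. -/
abbrev Chamber (𝒜 : Finset (Submodule ℝ V)) := ↥(Chambers 𝒜)

/-- A chosen point of a chamber. -/
noncomputable def Chamber.pt {𝒜 : Finset (Submodule ℝ V)} (c : Chamber 𝒜) : V :=
  c.2.choose

lemma Chamber.pt_mem {𝒜 : Finset (Submodule ℝ V)} (c : Chamber 𝒜) :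
    c.pt ∈ arrComplement 𝒜 := c.2.choose_spec.1

/-- `ε_H` : the chamber of the one-hyperplane arrangement `{H}` containing a
given chamber of `𝒜` (for `H ∈ 𝒜`). -/
noncomputable def epsC {𝒜 : Finset (Submodule ℝ V)} (H : Submodule ℝ V) (hH : H ∈ 𝒜)
    (c : Chamber 𝒜) : Chamber ({H} : Finset (Submodule ℝ V)) :=
  ⟨connectedComponentIn (arrComplement ({H} : Finset (Submodule ℝ V))) c.pt, by
    refine ⟨c.pt, ?_, rfl⟩
    intro H' hH'
    rw [Finset.mem_singleton] at hH'
    subst hH'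
    exact c.pt_mem _ hH⟩

/-- IIA for a map `Ch(𝒜)^m → Ch(𝒜)^l`. -/
def SatisfiesIIA {𝒜 : Finset (Submodule ℝ V)} {m l : ℕ}
    (Φ : (Fin m → Chamber 𝒜) → (Fin l → Chamber 𝒜)) : Prop :=
  ∀ (H : Submodule ℝ V) (hH : H ∈ 𝒜),
    ∃ φ : (Fin m → Chamber ({H} : Finset (Submodule ℝ V))) →
          (Fin l → Chamber ({H} : Finset (Submodule ℝ V))),
      ∀ c : Fin m → Chamber 𝒜,
        φ (fun i => epsC H hH (c i)) = fun j => epsC H hH (Φ c j)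

/-- IIA for a map `Ch(𝒜)^m → Ch(𝒜)`. -/
def SatisfiesIIA1 {𝒜 : Finset (Submodule ℝ V)} {m : ℕ}
    (Φ : (Fin m → Chamber 𝒜) → Chamber 𝒜) : Prop :=
  ∀ (H : Submodule ℝ V) (hH : H ∈ 𝒜),
    ∃ φ : (Fin m → Chamber ({H} : Finset (Submodule ℝ V))) →
          Chamber ({H} : Finset (Submodule ℝ V)),
      ∀ c : Fin m → Chamber 𝒜,
        φ (fun i => epsC H hH (c i)) = epsC H hH (Φ c)

/-- IIA for a map `Ch(𝒜) → Ch(𝒜)`. -/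
def SatisfiesIIAone {𝒜 : Finset (Submodule ℝ V)}
    (f : Chamber 𝒜 → Chamber 𝒜) : Prop :=
  ∀ (H : Submodule ℝ V) (hH : H ∈ 𝒜),
    ∃ φ : Chamber ({H} : Finset (Submodule ℝ V)) → Chamber ({H} : Finset (Submodule ℝ V)),
      ∀ c : Chamber 𝒜, φ (epsC H hH c) = epsC H hH (f c)

/-- Pareto property. -/
def SatisfiesPAR {𝒜 : Finset (Submodule ℝ V)} {m : ℕ}
    (Φ : (Fin m → Chamber 𝒜) → Chamber 𝒜) : Prop :=
  ∀ c : Chamber 𝒜, Φ (fun _ => c) = c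

/-- Admissible map: IIA and PAR. -/
def Admissible {𝒜 : Finset (Submodule ℝ V)} {m : ℕ}
    (Φ : (Fin m → Chamber 𝒜) → Chamber 𝒜) : Prop :=
  SatisfiesIIA1 Φ ∧ SatisfiesPAR Φ

/-- The rank `r(𝒜) = dim V − dim ⋂_{H ∈ 𝒜} H`. -/
noncomputable def arrRank (𝒜 : Finset (Submodule ℝ V)) : ℕ :=
  Module.finrank ℝ V - Module.finrank ℝ ↥(𝒜.inf id)

/-- Decomposability of a central arrangement. -/
def Decomposable (𝒜 : Finset (Submodule ℝ V)) : Prop :=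
  ∃ (n : ℕ) (parts : Fin n → Finset (Submodule ℝ V)),
    2 ≤ n ∧
    (∀ i, (parts i).Nonempty) ∧
    (∀ i j H, H ∈ parts i → H ∈ parts j → i = j) ∧
    (∀ H, H ∈ 𝒜 ↔ ∃ i, H ∈ parts i) ∧
    arrRank 𝒜 = ∑ i, arrRank (parts i)

/-- A dependent subarrangement: `r(ℬ) < |ℬ|`. -/
def Dependent (ℬ : Finset (Submodule ℝ V)) : Prop := arrRank ℬ < ℬ.card

/-- A circuit: a minimal dependent subarrangement. -/
def IsCircuit (ℬ : Finset (Submodule ℝ V)) : Prop :=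
  Dependent ℬ ∧ ∀ ℬ' ⊆ ℬ, Dependent ℬ' → ℬ' = ℬ

/-- The graph `Γ(𝒜)`: vertices are the hyperplanes of `𝒜`, with an edge between two
distinct hyperplanes iff some circuit of `𝒜` contains both. -/
def circuitGraph (𝒜 : Finset (Submodule ℝ V)) : SimpleGraph {H // H ∈ 𝒜} where
  Adj H H' := H ≠ H' ∧ ∃ ℬ ⊆ 𝒜, IsCircuit ℬ ∧ H.1 ∈ ℬ ∧ H'.1 ∈ ℬ
  symm := by
    constructor
    rintro a b ⟨hne, ℬ, hsub, hcirc, ha, hb⟩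
    exact ⟨hne.symm, ℬ, hsub, hcirc, hb, ha⟩
  loopless := by
    constructor
    rintro a ⟨h, -⟩
    exact h rfl

/-- `H` separates a set `T ⊆ Ch(𝒜)^m` if the image of `T` under `(ε_H)^m` has at
least two elements. -/
def SeparationOf {𝒜 : Finset (Submodule ℝ V)} {m : ℕ} (H : Submodule ℝ V) (hH : H ∈ 𝒜)
    (T : Set (Fin m → Chamber 𝒜)) : Prop :=
  ∃ t₁ ∈ T, ∃ t₂ ∈ T,
    (fun i => epsC H hH (t₁ i)) ≠ (fun i => epsC H hH (t₂ i))

end Arrangement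

section AuxSec
variable {V : Type*} [NormedAddCommGroup V] [NormedSpace ℝ V]
namespace ArrowAux
set_option linter.unusedSectionVars false

lemma sign_const_of_preconnected [FiniteDimensional ℝ V] (f : V →ₗ[ℝ] ℝ) {s : Set V}
    (hs : IsPreconnected s)
    (hf : ∀ z ∈ s, f z ≠ 0) {x y : V} (hx : x ∈ s) (hy : y ∈ s) :
    (0 < f x ↔ 0 < f y) := by
  have hcont : Continuous f := f.continuous_of_finiteDimensional
  have hu : IsOpen (f ⁻¹' Ioi (0:ℝ)) := isOpen_Ioi.preimage hcont
  have hv : IsOpen (f ⁻¹' Iio (0:ℝ)) := isOpen_Iio.preimage hcont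
  have hdisj : Disjoint (f ⁻¹' Ioi (0:ℝ)) (f ⁻¹' Iio (0:ℝ)) := by
    rw [Set.disjoint_iff]
    rintro z ⟨h1, h2⟩
    have h1' : (0:ℝ) < f z := h1
    have h2' : f z < (0:ℝ) := h2
    linarith
  have hsub : s ⊆ f ⁻¹' Ioi (0:ℝ) ∪ f ⁻¹' Iio (0:ℝ) := by
    intro z hz
    rcases lt_or_gt_of_ne (hf z hz) with h | h
    · exact Or.inr h
    · exact Or.inl h
  rcases hs.subset_or_subset hu hv hdisj hsub with h | h
  · have h1 : (0:ℝ) < f x := h hx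
    have h2 : (0:ℝ) < f y := h hy
    exact iff_of_true h1 h2
  · have h1 : f x < (0:ℝ) := h hx
    have h2 : f y < (0:ℝ) := h hy
    exact iff_of_false (by linarith) (by linarith)

lemma sign_eq_of_sameComponent [FiniteDimensional ℝ V] {𝒜 : Finset (Submodule ℝ V)}
    {x y : V} (h : y ∈ connectedComponentIn (arrComplement 𝒜) x)
    {H : Submodule ℝ V} (hH : H ∈ 𝒜) {f : V →ₗ[ℝ] ℝ} (hker : LinearMap.ker f = H) :
    (0 < f x ↔ 0 < f y) := by
  have hx : x ∈ connectedComponentIn (arrComplement 𝒜) x := by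
    rcases connectedComponentIn_nonempty_iff.mp ⟨y, h⟩ with hx
    exact mem_connectedComponentIn hx
  refine sign_const_of_preconnected f isPreconnected_connectedComponentIn ?_ hx h
  intro z hz
  have hz' : z ∈ arrComplement 𝒜 := connectedComponentIn_subset _ _ hz
  intro h0
  exact hz' H hH (hker ▸ LinearMap.mem_ker.mpr h0)

lemma sameComponent_of_signs {𝒜 : Finset (Submodule ℝ V)} (hA : IsCentralArrangement 𝒜)
    {x y : V} (hx : x ∈ arrComplement 𝒜) (hy : y ∈ arrComplement 𝒜)
    (h : ∀ H ∈ 𝒜, ∀ f : V →ₗ[ℝ] ℝ, LinearMap.ker f = H → (0 < f x ↔ 0 < f y)) :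
    connectedComponentIn (arrComplement 𝒜) x = connectedComponentIn (arrComplement 𝒜) y := by
  have hseg : segment ℝ x y ⊆ arrComplement 𝒜 := by
    rintro z hz
    rcases hz with ⟨a, b, ha, hb, hab, rfl⟩
    intro H hH hmem
    obtain ⟨f, hf0, hker⟩ := hA H hH
    have hfz : f (a • x + b • y) = 0 := by
      rw [← LinearMap.mem_ker, hker]; exact hmem
    have hfx : f x ≠ 0 := fun h0 => hx H hH (hker ▸ LinearMap.mem_ker.mpr h0)
    have hfy : f y ≠ 0 := fun h0 => hy H hH (hker ▸ LinearMap.mem_ker.mpr h0)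
    have hiff := h H hH f hker
    have hz : f (a • x + b • y) = a * f x + b * f y := by
      simp [map_add, map_smul, smul_eq_mul]
    rw [hz] at hfz
    rcases lt_or_gt_of_ne hfx with hneg | hpos
    · have hyneg : f y < 0 := by
        rcases lt_or_gt_of_ne hfy with h' | h'
        · exact h'
        · exact absurd (hiff.mpr h') (not_lt.mpr (le_of_lt hneg))
      have h1 : a * f x ≤ 0 := mul_nonpos_of_nonneg_of_nonpos ha hneg.le
      have h2 : b * f y ≤ 0 := mul_nonpos_of_nonneg_of_nonpos hb hyneg.le
      have h1' : a * f x = 0 := by linarith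
      have h2' : b * f y = 0 := by linarith
      have ha0 : a = 0 := (mul_eq_zero.mp h1').resolve_right hfx
      have hb0 : b = 0 := (mul_eq_zero.mp h2').resolve_right hfy
      rw [ha0, hb0] at hab; norm_num at hab
    · have hypos : 0 < f y := hiff.mp hpos
      have h1 : 0 ≤ a * f x := mul_nonneg ha hpos.le
      have h2 : 0 ≤ b * f y := mul_nonneg hb hypos.le
      have h1' : a * f x = 0 := by linarith
      have h2' : b * f y = 0 := by linarith
      have ha0 : a = 0 := (mul_eq_zero.mp h1').resolve_right hfx
      have hb0 : b = 0 := (mul_eq_zero.mp h2').resolve_right hfy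
      rw [ha0, hb0] at hab; norm_num at hab
  have hxseg : x ∈ segment ℝ x y := left_mem_segment ℝ x y
  have hyseg : y ∈ segment ℝ x y := right_mem_segment ℝ x y
  have hsub : segment ℝ x y ⊆ connectedComponentIn (arrComplement 𝒜) x :=
    (convex_segment x y).isPreconnected.subset_connectedComponentIn hxseg hseg
  exact connectedComponentIn_eq (hsub hyseg)

lemma exists_smul_of_ker_eq {f f' : V →ₗ[ℝ] ℝ} (hf : f ≠ 0)
    (h : LinearMap.ker f = LinearMap.ker f') :
    ∃ c : ℝ, c ≠ 0 ∧ ∀ v, f' v = c * f v := by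
  have : ∃ x₀, f x₀ ≠ 0 := by
    by_contra hc
    push_neg at hc
    exact hf (by ext v; simp [hc v])
  obtain ⟨x₀, hx₀⟩ := this
  have hx₀' : f' x₀ ≠ 0 := by
    intro h0
    exact hx₀ (LinearMap.mem_ker.mp (h ▸ LinearMap.mem_ker.mpr h0))
  refine ⟨f' x₀ / f x₀, div_ne_zero hx₀' hx₀, fun v => ?_⟩
  have hker : v - (f v / f x₀) • x₀ ∈ LinearMap.ker f := by
    rw [LinearMap.mem_ker]
    rw [map_sub, map_smul, smul_eq_mul]
    field_simp; ring
  rw [h] at hker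
  have hker' := LinearMap.mem_ker.mp hker
  rw [map_sub, map_smul, smul_eq_mul, sub_eq_zero] at hker'
  rw [hker']
  field_simp

lemma sign_iff_congr {f f' : V →ₗ[ℝ] ℝ} (hf : f ≠ 0)
    (h : LinearMap.ker f = LinearMap.ker f') {x y : V}
    (hx : f x ≠ 0) (hy : f y ≠ 0) (hiff : (0 < f x ↔ 0 < f y)) :
    (0 < f' x ↔ 0 < f' y) := by
  obtain ⟨c, hc, hval⟩ := exists_smul_of_ker_eq hf h
  rw [hval x, hval y]
  rcases lt_or_gt_of_ne hx with h1 | h1 <;> rcases lt_or_gt_of_ne hy with h2 | h2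
  · rcases lt_or_gt_of_ne hc with h3 | h3
    · exact iff_of_true (mul_pos_of_neg_of_neg h3 h1) (mul_pos_of_neg_of_neg h3 h2)
    · exact iff_of_false (by nlinarith) (by nlinarith)
  · exact absurd (hiff.mpr h2) (not_lt.mpr h1.le)
  · exact absurd (hiff.mp h1) (not_lt.mpr h2.le)
  · rcases lt_or_gt_of_ne hc with h3 | h3
    · exact iff_of_false (by nlinarith) (by nlinarith)
    · exact iff_of_true (mul_pos h3 h1) (mul_pos h3 h2)



lemma hyperplane_f_ne_zero {H : Submodule ℝ V} (hHyp : IsHyperplane H)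
    {f : V →ₗ[ℝ] ℝ} (hker : LinearMap.ker f = H) : f ≠ 0 := by
  obtain ⟨g, hg0, hgker⟩ := hHyp
  intro h0
  subst h0
  rw [LinearMap.ker_zero] at hker
  rw [← hker] at hgker
  exact hg0 (LinearMap.ker_eq_top.mp hgker)

lemma chamber_val_eq {𝒜 : Finset (Submodule ℝ V)} (c : Chamber 𝒜) :
    c.1 = connectedComponentIn (arrComplement 𝒜) c.pt := c.2.choose_spec.2

lemma pt_mem_val {𝒜 : Finset (Submodule ℝ V)} (c : Chamber 𝒜) : c.pt ∈ c.1 := by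
  rw [chamber_val_eq]
  exact mem_connectedComponentIn c.pt_mem

noncomputable def chamberOf (𝒜 : Finset (Submodule ℝ V)) {x : V}
    (hx : x ∈ arrComplement 𝒜) : Chamber 𝒜 :=
  ⟨connectedComponentIn (arrComplement 𝒜) x, x, hx, rfl⟩

lemma chamberOf_sign [FiniteDimensional ℝ V] {𝒜 : Finset (Submodule ℝ V)} {x : V}
    (hx : x ∈ arrComplement 𝒜) {H : Submodule ℝ V} (hH : H ∈ 𝒜)
    {f : V →ₗ[ℝ] ℝ} (hker : LinearMap.ker f = H) :
    (0 < f (chamberOf 𝒜 hx).pt ↔ 0 < f x) := by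
  have h1 : (chamberOf 𝒜 hx).pt ∈ connectedComponentIn (arrComplement 𝒜) x := by
    have := pt_mem_val (chamberOf 𝒜 hx)
    exact this
  exact (sign_eq_of_sameComponent h1 hH hker).symm

lemma chamber_eq_iff [FiniteDimensional ℝ V] {𝒜 : Finset (Submodule ℝ V)}
    (hA : IsCentralArrangement 𝒜) (c c' : Chamber 𝒜) :
    c = c' ↔ ∀ H ∈ 𝒜, ∀ f : V →ₗ[ℝ] ℝ, LinearMap.ker f = H →
      (0 < f c.pt ↔ 0 < f c'.pt) := by
  constructor
  · rintro rfl H hH f hker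
    exact Iff.rfl
  · intro h
    apply Subtype.ext
    rw [chamber_val_eq c, chamber_val_eq c']
    exact sameComponent_of_signs hA c.pt_mem c'.pt_mem h

lemma central_single {H : Submodule ℝ V} (hHyp : IsHyperplane H) :
    IsCentralArrangement ({H} : Finset (Submodule ℝ V)) := by
  intro H' hH'
  rw [Finset.mem_singleton] at hH'
  subst hH'; exact hHyp

lemma pt_not_mem {𝒜 : Finset (Submodule ℝ V)} (c : Chamber 𝒜) {H : Submodule ℝ V}
    (hH : H ∈ 𝒜) : c.pt ∉ H := c.pt_mem H hH

lemma f_pt_ne_zero {𝒜 : Finset (Submodule ℝ V)} (c : Chamber 𝒜) {H : Submodule ℝ V}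
    (hH : H ∈ 𝒜) {f : V →ₗ[ℝ] ℝ} (hker : LinearMap.ker f = H) : f c.pt ≠ 0 := by
  intro h0
  exact c.pt_mem H hH (hker ▸ LinearMap.mem_ker.mpr h0)

lemma chamber_single_eq_iff [FiniteDimensional ℝ V] {H : Submodule ℝ V}
    (hHyp : IsHyperplane H) (d d' : Chamber ({H} : Finset (Submodule ℝ V)))
    {f : V →ₗ[ℝ] ℝ} (hker : LinearMap.ker f = H) :
    d = d' ↔ (0 < f d.pt ↔ 0 < f d'.pt) := by
  have hmem : H ∈ ({H} : Finset (Submodule ℝ V)) := Finset.mem_singleton_self H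
  have hf0 : f ≠ 0 := hyperplane_f_ne_zero hHyp hker
  rw [chamber_eq_iff (central_single hHyp)]
  constructor
  · intro h
    exact h H hmem f hker
  · intro h H' hH' f' hker'
    rw [Finset.mem_singleton] at hH'
    subst hH'
    exact sign_iff_congr hf0 (hker.trans hker'.symm)
      (f_pt_ne_zero d hmem hker) (f_pt_ne_zero d' hmem hker) h

lemma epsC_sign [FiniteDimensional ℝ V] {𝒜 : Finset (Submodule ℝ V)}
    {H : Submodule ℝ V} (hH : H ∈ 𝒜) (c : Chamber 𝒜)
    {f : V →ₗ[ℝ] ℝ} (hker : LinearMap.ker f = H) :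
    (0 < f (epsC H hH c).pt ↔ 0 < f c.pt) := by
  have h1 : (epsC H hH c).pt ∈
      connectedComponentIn (arrComplement ({H} : Finset (Submodule ℝ V))) c.pt := by
    have := pt_mem_val (epsC H hH c)
    exact this
  exact (sign_eq_of_sameComponent (𝒜 := ({H} : Finset (Submodule ℝ V))) h1
    (Finset.mem_singleton_self H) hker).symm

lemma epsC_eq_iff [FiniteDimensional ℝ V] {𝒜 : Finset (Submodule ℝ V)}
    {H : Submodule ℝ V} (hHyp : IsHyperplane H) (hH : H ∈ 𝒜) (c c' : Chamber 𝒜)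
    {f : V →ₗ[ℝ] ℝ} (hker : LinearMap.ker f = H) :
    epsC H hH c = epsC H hH c' ↔ (0 < f c.pt ↔ 0 < f c'.pt) := by
  rw [chamber_single_eq_iff hHyp _ _ hker]
  constructor
  · intro h
    rw [← epsC_sign hH c hker, ← epsC_sign hH c' hker]
    exact h
  · intro h
    rw [epsC_sign hH c hker, epsC_sign hH c' hker]
    exact h

lemma isOpen_arrComplement [FiniteDimensional ℝ V] {𝒜 : Finset (Submodule ℝ V)}
    (hA : IsCentralArrangement 𝒜) : IsOpen (arrComplement 𝒜) := by
  have : arrComplement 𝒜 = ⋂ H ∈ (𝒜 : Set (Submodule ℝ V)), (↑H)ᶜ := by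
    ext x; simp [arrComplement]
  rw [this]
  refine Set.Finite.isOpen_biInter (Finset.finite_toSet 𝒜) ?_
  intro H hH
  obtain ⟨f, hf0, hker⟩ := hA H hH
  have : (↑H : Set V) = f ⁻¹' {0} := by
    ext x
    simp [← hker, LinearMap.mem_ker]
  rw [← isClosed_compl_iff, compl_compl, this]
  exact (isClosed_singleton).preimage f.continuous_of_finiteDimensional

lemma exists_mem_open_complement [FiniteDimensional ℝ V] {𝒜 : Finset (Submodule ℝ V)}
    (hA : IsCentralArrangement 𝒜) {U : Set V} (hU : IsOpen U) (hne : U.Nonempty) :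
    ∃ z ∈ U, z ∈ arrComplement 𝒜 := by
  classical
  induction 𝒜 using Finset.induction with
  | empty =>
    obtain ⟨z, hz⟩ := hne
    exact ⟨z, hz, fun H hH => absurd hH (Finset.notMem_empty H)⟩
  | @insert H s hHs ih =>
    have hAs : IsCentralArrangement s := fun H' hH' => hA H' (Finset.mem_insert_of_mem hH')
    obtain ⟨x, hxU, hxs⟩ := ih hAs
    obtain ⟨f, hf0, hker⟩ := hA H (Finset.mem_insert_self H s)
    set W := U ∩ arrComplement s with hW
    have hWopen : IsOpen W := hU.inter (isOpen_arrComplement hAs)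
    have hxW : x ∈ W := ⟨hxU, hxs⟩
    -- find a point of W off H
    have : ∃ z ∈ W, z ∉ H := by
      by_contra hc
      push_neg at hc
      -- W ⊆ H
      obtain ⟨v, hv⟩ : ∃ v, f v ≠ 0 := by
        by_contra hv
        push_neg at hv
        exact hf0 (by ext u; simp [hv u])
      have hv0 : v ≠ 0 := by rintro rfl; simp at hv
      obtain ⟨ε, hε, hball⟩ := Metric.isOpen_iff.mp hWopen x hxW
      set t := ε / (2 * ‖v‖) with ht
      have hnorm : (0:ℝ) < ‖v‖ := norm_pos_iff.mpr hv0
      have htpos : 0 < t := by positivity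
      have hmem : x + t • v ∈ Metric.ball x ε := by
        rw [Metric.mem_ball, dist_eq_norm]
        have : x + t • v - x = t • v := by abel
        rw [this, norm_smul, Real.norm_eq_abs, abs_of_pos htpos]
        have hvv : t * ‖v‖ = ε / 2 := by
          rw [ht]; field_simp
        linarith
      have hxH : x ∈ H := hc x hxW
      have hzH : x + t • v ∈ H := hc _ (hball hmem)
      have : t • v ∈ H := by
        have := H.sub_mem hzH hxH
        simpa using this
      have : f (t • v) = 0 := by
        rw [← LinearMap.mem_ker, hker]; exact this
      rw [map_smul, smul_eq_mul] at this
      rcases mul_eq_zero.mp this with h | h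
      · exact absurd h (ne_of_gt htpos)
      · exact hv h
    obtain ⟨z, hzW, hzH⟩ := this
    refine ⟨z, hzW.1, ?_⟩
    intro H' hH'
    rcases Finset.mem_insert.mp hH' with rfl | hH's
    · exact hzH
    · exact hzW.2 H' hH's

lemma exists_point_complement [FiniteDimensional ℝ V] {𝒜 : Finset (Submodule ℝ V)}
    (hA : IsCentralArrangement 𝒜) : ∃ z, z ∈ arrComplement 𝒜 := by
  obtain ⟨z, _, hz⟩ := exists_mem_open_complement hA isOpen_univ ⟨0, trivial⟩
  exact ⟨z, hz⟩

lemma neg_mem_complement {𝒜 : Finset (Submodule ℝ V)} {x : V}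
    (hx : x ∈ arrComplement 𝒜) : -x ∈ arrComplement 𝒜 := by
  intro H hH hmem
  exact hx H hH (by simpa using H.neg_mem hmem)

lemma exists_chamber_sign [FiniteDimensional ℝ V] {𝒜 : Finset (Submodule ℝ V)}
    (hA : IsCentralArrangement 𝒜) {H : Submodule ℝ V} (hH : H ∈ 𝒜)
    {f : V →ₗ[ℝ] ℝ} (hker : LinearMap.ker f = H) (b : Bool) :
    ∃ c : Chamber 𝒜, (0 < f c.pt ↔ b = true) := by
  obtain ⟨z, hz⟩ := exists_point_complement hA
  have hfz : f z ≠ 0 := fun h0 => hz H hH (hker ▸ LinearMap.mem_ker.mpr h0)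
  have hneg : -z ∈ arrComplement 𝒜 := neg_mem_complement hz
  rcases lt_or_gt_of_ne hfz with hn | hp
  · cases b with
    | true =>
      refine ⟨chamberOf 𝒜 hneg, ?_⟩
      rw [chamberOf_sign hneg hH hker]
      simp only [map_neg]
      constructor
      · intro _; trivial
      · intro _; linarith
    | false =>
      refine ⟨chamberOf 𝒜 hz, ?_⟩
      rw [chamberOf_sign hz hH hker]
      constructor
      · intro h; linarith
      · intro h; exact absurd h (by simp)
  · cases b with
    | true =>
      refine ⟨chamberOf 𝒜 hz, ?_⟩
      rw [chamberOf_sign hz hH hker]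
      exact iff_of_true hp rfl
    | false =>
      refine ⟨chamberOf 𝒜 hneg, ?_⟩
      rw [chamberOf_sign hneg hH hker]
      simp only [map_neg]
      exact iff_of_false (by linarith) (by simp)

open Module

open Classical in
noncomputable def functOf (H : Submodule ℝ V) : V →ₗ[ℝ] ℝ :=
  if h : IsHyperplane H then h.choose else 0

lemma functOf_ne_zero {H : Submodule ℝ V} (h : IsHyperplane H) : functOf H ≠ 0 := by
  rw [functOf]
  rw [dif_pos h]
  exact h.choose_spec.1

lemma functOf_ker {H : Submodule ℝ V} (h : IsHyperplane H) :
    LinearMap.ker (functOf H) = H := by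
  rw [functOf, dif_pos h]
  exact h.choose_spec.2

noncomputable def dualSpan (ℒ : Finset (Submodule ℝ V)) : Submodule ℝ (Module.Dual ℝ V) :=
  Submodule.span ℝ (functOf '' (ℒ : Set (Submodule ℝ V)))

lemma inf_eq_dualCoannihilator {ℬ : Finset (Submodule ℝ V)} (hA : IsCentralArrangement ℬ) :
    ℬ.inf id = (dualSpan ℬ).dualCoannihilator := by
  have hds : dualSpan ℬ = Submodule.span ℝ (functOf '' (ℬ : Set (Submodule ℝ V))) := rfl
  ext x
  rw [Submodule.mem_finsetInf, Submodule.mem_dualCoannihilator]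
  constructor
  · intro h φ hφ
    rw [hds] at hφ
    refine Submodule.span_induction ?_ ?_ ?_ ?_ hφ
    · rintro ψ ⟨H, hH, rfl⟩
      have := h H hH
      simp only [id_eq] at this
      rw [← functOf_ker (hA H hH), LinearMap.mem_ker] at this
      exact this
    · simp
    · intro ψ ψ' _ _ h1 h2; simp [h1, h2]
    · intro a ψ _ h1; simp [h1]
  · intro h H hH
    simp only [id_eq]
    rw [← functOf_ker (hA H hH), LinearMap.mem_ker]
    exact h _ (by rw [hds]; exact Submodule.subset_span ⟨H, hH, rfl⟩)

lemma arrRank_eq_finrank_span [FiniteDimensional ℝ V] {ℬ : Finset (Submodule ℝ V)}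
    (hA : IsCentralArrangement ℬ) :
    arrRank ℬ = finrank ℝ (dualSpan ℬ) := by
  have h := Subspace.finrank_add_finrank_dualCoannihilator_eq (dualSpan ℬ)
  rw [arrRank, inf_eq_dualCoannihilator hA]
  omega

lemma dependent_iff [FiniteDimensional ℝ V] {ℬ : Finset (Submodule ℝ V)}
    (hA : IsCentralArrangement ℬ) :
    Dependent ℬ ↔ ¬ LinearIndependent ℝ (fun H : {H // H ∈ ℬ} => functOf H.1) := by
  have hrange : Set.range (fun H : {H // H ∈ ℬ} => functOf H.1)
      = functOf '' (ℬ : Set (Submodule ℝ V)) := by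
    ext φ
    constructor
    · rintro ⟨⟨H, hH⟩, rfl⟩; exact ⟨H, hH, rfl⟩
    · rintro ⟨H, hH, rfl⟩; exact ⟨⟨H, hH⟩, rfl⟩
  have hle : Set.finrank ℝ (Set.range (fun H : {H // H ∈ ℬ} => functOf H.1))
      ≤ Fintype.card {H // H ∈ ℬ} := finrank_range_le_card _
  have hbridge : finrank ℝ (dualSpan ℬ) =
      Set.finrank ℝ (Set.range (fun H : {H // H ∈ ℬ} => functOf H.1)) := by
    rw [Set.finrank, hrange]
    rfl
  rw [Dependent, arrRank_eq_finrank_span hA, hbridge]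
  rw [linearIndependent_iff_card_eq_finrank_span]
  rw [Fintype.card_coe] at hle ⊢
  omega

lemma circuit_dependence [FiniteDimensional ℝ V] {ℒ : Finset (Submodule ℝ V)}
    (hA : IsCentralArrangement ℒ) (hcirc : IsCircuit ℒ) :
    ∃ a : Submodule ℝ V → ℝ, (∀ H ∈ ℒ, a H ≠ 0) ∧ (∀ H, H ∉ ℒ → a H = 0) ∧
      ∑ H ∈ ℒ, a H • functOf H = 0 := by
  classical
  have hdep := hcirc.1
  rw [dependent_iff hA] at hdep
  rw [Fintype.not_linearIndependent_iff] at hdep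
  obtain ⟨g, hsum, i₀, hi₀⟩ := hdep
  set a : Submodule ℝ V → ℝ := fun H => if h : H ∈ ℒ then g ⟨H, h⟩ else 0 with ha
  have hsum' : ∑ H ∈ ℒ, a H • functOf H = 0 := by
    calc ∑ H ∈ ℒ, a H • functOf H
        = ∑ i : {H // H ∈ ℒ}, a i.1 • functOf i.1 :=
          (Finset.sum_coe_sort ℒ (fun H => a H • functOf H)).symm
      _ = ∑ i : {H // H ∈ ℒ}, g i • functOf i.1 := by
          apply Finset.sum_congr rfl
          intro i _
          simp [ha, i.2]
      _ = 0 := hsum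
  set S := ℒ.filter (fun H => a H ≠ 0) with hS
  have hSsub : S ⊆ ℒ := Finset.filter_subset _ _
  have hsumS : ∑ H ∈ S, a H • functOf H = 0 := by
    rw [← hsum']
    apply Finset.sum_subset hSsub
    intro H hH hHS
    have : a H = 0 := by
      by_contra hc
      exact hHS (Finset.mem_filter.mpr ⟨hH, hc⟩)
    simp [this]
  have hSdep : Dependent S := by
    rw [dependent_iff (fun H hH => hA H (hSsub hH))]
    rw [Fintype.not_linearIndependent_iff]
    refine ⟨fun H => a H.1, ?_, ?_⟩
    · calc ∑ i : {H // H ∈ S}, a i.1 • functOf i.1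
          = ∑ H ∈ S, a H • functOf H := Finset.sum_coe_sort S (fun H => a H • functOf H)
        _ = 0 := hsumS
    · have hi₀S : i₀.1 ∈ S := by
        refine Finset.mem_filter.mpr ⟨i₀.2, ?_⟩
        simpa [ha, i₀.2] using hi₀
      exact ⟨⟨i₀.1, hi₀S⟩, by simpa [ha, i₀.2] using hi₀⟩
  have hSB : S = ℒ := hcirc.2 S hSsub hSdep
  refine ⟨a, ?_, ?_, hsum'⟩
  · intro H hH
    rw [← hSB] at hH
    exact (Finset.mem_filter.mp hH).2
  · intro H hH
    simp [ha, hH]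

lemma circuit_proper_indep [FiniteDimensional ℝ V] {ℬ ℬ' : Finset (Submodule ℝ V)}
    (hA : IsCentralArrangement ℬ) (hcirc : IsCircuit ℬ) (hsub : ℬ' ⊆ ℬ) (hne : ℬ' ≠ ℬ) :
    LinearIndependent ℝ (fun H : {H // H ∈ ℬ'} => functOf H.1) := by
  by_contra hc
  rw [← dependent_iff (fun H hH => hA H (hsub hH))] at hc
  exact hne (hcirc.2 ℬ' hsub hc)

lemma dependent_nonempty {ℬ : Finset (Submodule ℝ V)} (h : Dependent ℬ) : ℬ.Nonempty := by
  rw [Dependent] at h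
  rw [← Finset.card_pos]
  omega

lemma circuit_card_three [FiniteDimensional ℝ V] {ℬ : Finset (Submodule ℝ V)}
    (hA : IsCentralArrangement ℬ) (hcirc : IsCircuit ℬ) : 3 ≤ ℬ.card := by
  classical
  obtain ⟨a, hane, _, hsum⟩ := circuit_dependence hA hcirc
  by_contra hc
  push_neg at hc
  have hne := dependent_nonempty hcirc.1
  interval_cases h : ℬ.card
  · rw [Finset.card_eq_zero] at h
    subst h
    exact absurd rfl (Finset.nonempty_iff_ne_empty.mp hne)
  · obtain ⟨H, hH⟩ := Finset.card_eq_one.mp h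
    subst hH
    rw [Finset.sum_singleton] at hsum
    rcases smul_eq_zero.mp hsum with h' | h'
    · exact hane H (Finset.mem_singleton_self H) h'
    · exact functOf_ne_zero (hA H (Finset.mem_singleton_self H)) h'
  · obtain ⟨H, H', hHH', hpair⟩ := Finset.card_eq_two.mp h
    subst hpair
    have hH : H ∈ ({H, H'} : Finset (Submodule ℝ V)) := by simp
    have hH'2 : H' ∈ ({H, H'} : Finset (Submodule ℝ V)) := by simp
    rw [Finset.sum_pair hHH'] at hsum
    have haH := hane H hH
    have haH' := hane H' hH'2
    have hsm : a H' • functOf H' = (-(a H)) • functOf H := by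
      exact (eq_neg_of_add_eq_zero_right hsum).trans (neg_smul _ _).symm
    have hker : LinearMap.ker (functOf H') = LinearMap.ker (functOf H) := by
      have h1 : LinearMap.ker (a H' • functOf H') = LinearMap.ker (functOf H') :=
        LinearMap.ker_smul _ _ haH'
      have h2 : LinearMap.ker ((-(a H)) • functOf H) = LinearMap.ker (functOf H) :=
        LinearMap.ker_smul _ _ (neg_ne_zero.mpr haH)
      rw [← h1, hsm, h2]
    rw [functOf_ker (hA H' hH'2), functOf_ker (hA H hH)] at hker
    exact hHH' hker.symm

lemma indep_surjective [FiniteDimensional ℝ V] {ι : Type*} [Fintype ι]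
    {g : ι → V →ₗ[ℝ] ℝ} (hg : LinearIndependent ℝ g) (t : ι → ℝ) :
    ∃ x : V, ∀ i, g i x = t i := by
  set L : V →ₗ[ℝ] (ι → ℝ) := LinearMap.pi g with hL
  have hker : LinearMap.ker L = (Submodule.span ℝ (Set.range g) :
      Submodule ℝ (Module.Dual ℝ V)).dualCoannihilator := by
    rw [hL, LinearMap.ker_pi]
    ext x
    rw [Submodule.mem_iInf, Submodule.mem_dualCoannihilator]
    constructor
    · intro h φ hφ
      refine Submodule.span_induction ?_ ?_ ?_ ?_ hφ
      · rintro ψ ⟨i, rfl⟩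
        exact LinearMap.mem_ker.mp (h i)
      · simp
      · intro ψ ψ' _ _ h1 h2; simp [h1, h2]
      · intro a ψ _ h1; simp [h1]
    · intro h i
      exact LinearMap.mem_ker.mpr (h _ (Submodule.subset_span ⟨i, rfl⟩))
  have h1 := LinearMap.finrank_range_add_finrank_ker L
  have h2 := Subspace.finrank_add_finrank_dualCoannihilator_eq
    (Submodule.span ℝ (Set.range g) : Submodule ℝ (Module.Dual ℝ V))
  have h3 : finrank ℝ (Submodule.span ℝ (Set.range g) : Submodule ℝ (Module.Dual ℝ V))
      = Fintype.card ι := finrank_span_eq_card hg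
  have h4 : finrank ℝ (ι → ℝ) = Fintype.card ι := by
    simp [Module.finrank_pi]
  have hrange : LinearMap.range L = ⊤ := by
    apply Submodule.eq_top_of_finrank_eq
    rw [hker] at h1
    omega
  have hsurj : Function.Surjective L := LinearMap.range_eq_top.mp hrange
  obtain ⟨x, hx⟩ := hsurj t
  exact ⟨x, fun i => congrFun hx i⟩


lemma exists_circuit_subset [FiniteDimensional ℝ V] :
    ∀ (n : ℕ) (S : Finset (Submodule ℝ V)), S.card ≤ n → IsCentralArrangement S →
      Dependent S → ∃ C, C ⊆ S ∧ IsCircuit C := by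
  intro n
  induction n with
  | zero =>
    intro S hcard hA hdep
    have := dependent_nonempty hdep
    rw [← Finset.card_pos] at this
    omega
  | succ n ih =>
    intro S hcard hA hdep
    by_cases h : ∀ S' ⊆ S, Dependent S' → S' = S
    · exact ⟨S, Finset.Subset.refl S, hdep, h⟩
    · push_neg at h
      obtain ⟨S', hsub, hdep', hne⟩ := h
      have hss : S' ⊂ S := lt_of_le_of_ne hsub hne
      have hcard' : S'.card ≤ n := by
        have := Finset.card_lt_card hss
        omega
      obtain ⟨C, hC, hcirc⟩ := ih S' hcard' (fun H hH => hA H (hsub hH)) hdep'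
      exact ⟨C, hC.trans hsub, hcirc⟩

lemma supp_dependence_dependent [FiniteDimensional ℝ V] {S : Finset (Submodule ℝ V)}
    (hA : IsCentralArrangement S) (a : Submodule ℝ V → ℝ)
    (hsupp : ∀ H ∈ S, a H ≠ 0) (hne : S.Nonempty)
    (hsum : ∑ H ∈ S, a H • functOf H = 0) : Dependent S := by
  rw [dependent_iff hA, Fintype.not_linearIndependent_iff]
  refine ⟨fun H => a H.1, ?_, ?_⟩
  · calc ∑ i : {H // H ∈ S}, a i.1 • functOf i.1
        = ∑ H ∈ S, a H • functOf H := Finset.sum_coe_sort S (fun H => a H • functOf H)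
      _ = 0 := hsum
  · obtain ⟨H, hH⟩ := hne
    exact ⟨⟨H, hH⟩, hsupp H hH⟩

/-- Partial sums over the classes of a circuit-monochromatic 2-coloring vanish. -/
lemma psum_zero [FiniteDimensional ℝ V] {𝒜 : Finset (Submodule ℝ V)}
    (hA : IsCentralArrangement 𝒜) (cls : Submodule ℝ V → Bool)
    (hcls : ∀ C ⊆ 𝒜, IsCircuit C → ∀ H ∈ C, ∀ H' ∈ C, cls H = cls H') :
    ∀ (n : ℕ) (a : Submodule ℝ V → ℝ), (𝒜.filter (fun H => a H ≠ 0)).card ≤ n →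
      (∀ H, a H ≠ 0 → H ∈ 𝒜) → ∑ H ∈ 𝒜, a H • functOf H = 0 →
      ∀ b : Bool, ∑ H ∈ 𝒜.filter (fun H => cls H = b), a H • functOf H = 0 := by
  classical
  intro n
  induction n with
  | zero =>
    intro a hcard _ _ b
    have hz : ∀ H ∈ 𝒜, a H = 0 := by
      intro H hH
      by_contra hc
      have : H ∈ 𝒜.filter (fun H => a H ≠ 0) := Finset.mem_filter.mpr ⟨hH, hc⟩
      have := Finset.card_pos.mpr ⟨H, this⟩
      omega
    apply Finset.sum_eq_zero
    intro H hH
    rw [hz H (Finset.filter_subset _ _ hH)]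
    simp
  | succ n ih =>
    intro a hcard hmem hsum b
    set S := 𝒜.filter (fun H => a H ≠ 0) with hSdef
    by_cases hSne : S = ∅
    · have hz : ∀ H ∈ 𝒜, a H = 0 := by
        intro H hH
        by_contra hc
        have : H ∈ S := Finset.mem_filter.mpr ⟨hH, hc⟩
        rw [hSne] at this
        exact absurd this (Finset.notMem_empty H)
      apply Finset.sum_eq_zero
      intro H hH
      rw [hz H (Finset.filter_subset _ _ hH)]
      simp
    · have hSsub : S ⊆ 𝒜 := Finset.filter_subset _ _
      have hAS : IsCentralArrangement S := fun H hH => hA H (hSsub hH)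
      have hsumS : ∑ H ∈ S, a H • functOf H = 0 := by
        rw [← hsum]
        apply Finset.sum_subset hSsub
        intro H hH hHS
        have : a H = 0 := by
          by_contra hc
          exact hHS (Finset.mem_filter.mpr ⟨hH, hc⟩)
        simp [this]
      have hSdep : Dependent S :=
        supp_dependence_dependent hAS a (fun H hH => (Finset.mem_filter.mp hH).2)
          (Finset.nonempty_iff_ne_empty.mpr hSne) hsumS
      obtain ⟨C, hCS, hcirc⟩ := exists_circuit_subset S.card S le_rfl hAS hSdep
      have hCA : C ⊆ 𝒜 := hCS.trans hSsub
      have hAC : IsCentralArrangement C := fun H hH => hA H (hCA hH)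
      obtain ⟨e, heC, heout, hesum⟩ := circuit_dependence hAC hcirc
      obtain ⟨h0, hh0⟩ := dependent_nonempty hcirc.1
      have heh0 : e h0 ≠ 0 := heC h0 hh0
      set q := a h0 / e h0 with hq
      set a' : Submodule ℝ V → ℝ := fun H => a H - q * e H with ha'
      -- sum over 𝒜 of e vanishes
      have hesumA : ∑ H ∈ 𝒜, e H • functOf H = 0 := by
        rw [← hesum]
        symm
        apply Finset.sum_subset hCA
        intro H hH hHC
        rw [heout H hHC]
        simp
      have hsum' : ∑ H ∈ 𝒜, a' H • functOf H = 0 := by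
        have : ∀ H, a' H • functOf H = a H • functOf H - q • (e H • functOf H) := by
          intro H
          show (a H - q * e H) • functOf H = _
          exact (sub_smul (a H) (q * e H) (functOf H)).trans (congrArg _ (smul_smul q (e H) (functOf H)).symm)
        rw [Finset.sum_congr rfl (fun H _ => this H)]
        rw [Finset.sum_sub_distrib, hsum, ← Finset.smul_sum, hesumA]
        simp
      have hmem' : ∀ H, a' H ≠ 0 → H ∈ 𝒜 := by
        intro H hH
        by_cases h1 : a H ≠ 0
        · exact hmem H h1
        · push_neg at h1
          rw [ha'] at hH
          simp only [h1, zero_sub, neg_ne_zero] at hH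
          have : e H ≠ 0 := by
            intro h2
            rw [h2] at hH
            simp at hH
          by_contra hc
          exact this (heout H (fun hmemC => hc (hCA hmemC)))
      have hsupp' : 𝒜.filter (fun H => a' H ≠ 0) ⊆ S.erase h0 := by
        intro H hH
        obtain ⟨hHA, hHne⟩ := Finset.mem_filter.mp hH
        refine Finset.mem_erase.mpr ⟨?_, ?_⟩
        · intro hEq
          apply hHne
          rw [hEq]
          show a h0 - q * e h0 = 0
          rw [hq]
          field_simp
          simp
        · refine Finset.mem_filter.mpr ⟨hHA, ?_⟩
          intro hazero
          apply hHne
          have heH : e H = 0 := by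
            by_contra hc
            have : H ∈ C := by
              by_contra hc2
              exact hc (heout H hc2)
            exact (Finset.mem_filter.mp (hCS this)).2 hazero
          show a H - q * e H = 0
          rw [hazero, heH]
          ring
      have hcard' : (𝒜.filter (fun H => a' H ≠ 0)).card ≤ n := by
        have h1 := Finset.card_le_card hsupp'
        have h2 : (S.erase h0).card < S.card :=
          Finset.card_erase_lt_of_mem (Finset.mem_filter.mpr
            ⟨hCA hh0, (Finset.mem_filter.mp (hCS hh0)).2⟩)
        omega
      have hIH := ih a' hcard' hmem' hsum' b
      -- relate psum of a and a'
      obtain ⟨Hc, hHc⟩ := dependent_nonempty hcirc.1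
      have hCmono : ∀ H ∈ C, cls H = cls Hc := fun H hH => hcls C hCA hcirc H hH Hc hHc
      have hesumcls : ∑ H ∈ 𝒜.filter (fun H => cls H = b), e H • functOf H = 0 := by
        by_cases hbb : b = cls Hc
        · have heq : ∑ H ∈ 𝒜.filter (fun H => cls H = b), e H • functOf H
              = ∑ H ∈ C, e H • functOf H := by
            symm
            apply Finset.sum_subset
            · intro H hH
              refine Finset.mem_filter.mpr ⟨hCA hH, ?_⟩
              rw [hCmono H hH, hbb]
            · intro H _ hHC
              rw [heout H hHC]
              simp
          rw [heq, hesum]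
        · apply Finset.sum_eq_zero
          intro H hH
          have hHb : cls H = b := (Finset.mem_filter.mp hH).2
          have hnC : H ∉ C := by
            intro hc
            exact hbb (by rw [← hHb, hCmono H hc])
          rw [heout H hnC]
          simp
      have : ∑ H ∈ 𝒜.filter (fun H => cls H = b), a H • functOf H
          = ∑ H ∈ 𝒜.filter (fun H => cls H = b), a' H • functOf H
            + q • ∑ H ∈ 𝒜.filter (fun H => cls H = b), e H • functOf H := by
        rw [Finset.smul_sum, ← Finset.sum_add_distrib]
        apply Finset.sum_congr rfl
        intro H _
        show a H • functOf H = (a H - q * e H) • functOf H + q • (e H • functOf H)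
        have e1 : (a H - q * e H) • functOf H = a H • functOf H - q • (e H • functOf H) :=
          (sub_smul (a H) (q * e H) (functOf H)).trans (congrArg _ (smul_smul q (e H) (functOf H)).symm)
        rw [e1]
        abel
      rw [this, hIH, hesumcls]
      simp

lemma coeffs_of_mem_span [FiniteDimensional ℝ V] {P : Finset (Submodule ℝ V)}
    (hP : IsCentralArrangement P) {x : Module.Dual ℝ V} (hx : x ∈ dualSpan P) :
    ∃ c : Submodule ℝ V → ℝ, (∀ H, H ∉ P → c H = 0) ∧ ∑ H ∈ P, c H • functOf H = x := by
  classical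
  have hinj : Set.InjOn functOf (P : Set (Submodule ℝ V)) := by
    intro H1 h1 H2 h2 heq
    rw [← functOf_ker (hP H1 h1), ← functOf_ker (hP H2 h2), heq]
  have hx' : x ∈ Submodule.span ℝ ((P.image functOf : Finset (Module.Dual ℝ V)) :
      Set (Module.Dual ℝ V)) := by
    have : ((P.image functOf : Finset (V →ₗ[ℝ] ℝ)) : Set (V →ₗ[ℝ] ℝ))
        = functOf '' (P : Set (Submodule ℝ V)) := Finset.coe_image
    rw [show ((P.image functOf : Finset (Module.Dual ℝ V)) : Set (Module.Dual ℝ V))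
        = functOf '' (P : Set (Submodule ℝ V)) from Finset.coe_image]
    exact hx
  rw [Submodule.mem_span_finset] at hx'
  obtain ⟨f, -, hf⟩ := hx'
  refine ⟨fun H => if H ∈ P then f (functOf H) else 0, fun H hH => if_neg hH, ?_⟩
  have : ∑ H ∈ P, (if H ∈ P then f (functOf H) else 0) • functOf H
      = ∑ H ∈ P, f (functOf H) • functOf H := by
    apply Finset.sum_congr rfl
    intro H hH
    rw [if_pos hH]
  have himg : ∑ φ ∈ P.image functOf, f φ • φ = ∑ H ∈ P, f (functOf H) • functOf H :=
    Finset.sum_image (fun H h1 H' h2 heq => hinj h1 h2 heq)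
  rw [this, ← himg]
  exact hf

/-- Rank additivity for a circuit-monochromatic 2-coloring. -/
lemma rank_additive_two [FiniteDimensional ℝ V] {𝒜 : Finset (Submodule ℝ V)}
    (hA : IsCentralArrangement 𝒜) (cls : Submodule ℝ V → Bool)
    (hcls : ∀ C ⊆ 𝒜, IsCircuit C → ∀ H ∈ C, ∀ H' ∈ C, cls H = cls H') :
    arrRank 𝒜 = arrRank (𝒜.filter (fun H => cls H = true))
      + arrRank (𝒜.filter (fun H => cls H = false)) := by
  classical
  set P := 𝒜.filter (fun H => cls H = true) with hPdef
  set Q := 𝒜.filter (fun H => cls H = false) with hQdef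
  have hPsub : P ⊆ 𝒜 := Finset.filter_subset _ _
  have hQsub : Q ⊆ 𝒜 := Finset.filter_subset _ _
  have hAP : IsCentralArrangement P := fun H hH => hA H (hPsub hH)
  have hAQ : IsCentralArrangement Q := fun H hH => hA H (hQsub hH)
  have hunion : P ∪ Q = 𝒜 := by
    ext H
    simp only [Finset.mem_union, hPdef, hQdef, Finset.mem_filter]
    constructor
    · rintro (⟨h, _⟩ | ⟨h, _⟩) <;> exact h
    · intro h
      cases hb : cls H
      · exact Or.inr ⟨h, rfl⟩
      · exact Or.inl ⟨h, rfl⟩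
  have hsup : dualSpan 𝒜 = dualSpan P ⊔ dualSpan Q := by
    rw [dualSpan, dualSpan, dualSpan, ← Submodule.span_union, ← Set.image_union]
    congr 1
    rw [← Finset.coe_union, hunion]
  have hdisj : ∀ H ∈ P, H ∉ Q := by
    intro H hH hHQ
    have h1 := (Finset.mem_filter.mp hH).2
    have h2 := (Finset.mem_filter.mp hHQ).2
    rw [h1] at h2
    exact absurd h2 (by simp)
  have hinf : dualSpan P ⊓ dualSpan Q = ⊥ := by
    rw [Submodule.eq_bot_iff]
    rintro x ⟨hxP, hxQ⟩
    obtain ⟨c, hc0, hcsum⟩ := coeffs_of_mem_span hAP hxP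
    obtain ⟨d, hd0, hdsum⟩ := coeffs_of_mem_span hAQ hxQ
    set a : Submodule ℝ V → ℝ := fun H => c H - d H with ha
    have hmem : ∀ H, a H ≠ 0 → H ∈ 𝒜 := by
      intro H hH
      by_cases h1 : H ∈ P
      · exact hPsub h1
      · by_cases h2 : H ∈ Q
        · exact hQsub h2
        · exfalso
          apply hH
          show c H - d H = 0
          rw [hc0 H h1, hd0 H h2, sub_zero]
    have hcP : ∑ H ∈ P, a H • functOf H = x := by
      rw [← hcsum]
      apply Finset.sum_congr rfl
      intro H hH
      show (c H - d H) • functOf H = c H • functOf H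
      rw [hd0 H (hdisj H hH), sub_zero]
    have hdQ : ∑ H ∈ Q, a H • functOf H = -x := by
      rw [← hdsum]
      rw [← Finset.sum_neg_distrib]
      apply Finset.sum_congr rfl
      intro H hH
      have hHP : H ∉ P := fun hc => hdisj H hc hH
      show (c H - d H) • functOf H = -(d H • functOf H)
      rw [hc0 H hHP, zero_sub]
      exact neg_smul (d H) (functOf H)
    have hsum : ∑ H ∈ 𝒜, a H • functOf H = 0 := by
      rw [← hunion, Finset.sum_union (Finset.disjoint_left.mpr hdisj)]
      rw [hcP, hdQ]
      simp
    have := psum_zero hA cls hcls (𝒜.filter (fun H => a H ≠ 0)).card a le_rfl hmem hsum true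
    rw [← hPdef] at this
    rw [hcP] at this
    exact this
  have h1 := Submodule.finrank_sup_add_finrank_inf_eq (dualSpan P) (dualSpan Q)
  rw [hinf] at h1
  rw [finrank_bot] at h1
  rw [arrRank_eq_finrank_span hA, arrRank_eq_finrank_span hAP, arrRank_eq_finrank_span hAQ,
    hsup]
  omega

/-- Circuit relation. -/
def CircRel (𝒜 : Finset (Submodule ℝ V)) (H H' : Submodule ℝ V) : Prop :=
  ∃ C ⊆ 𝒜, IsCircuit C ∧ H ∈ C ∧ H' ∈ C

lemma circuit_connected [FiniteDimensional ℝ V] {𝒜 : Finset (Submodule ℝ V)}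
    (hA : IsCentralArrangement 𝒜) (hind : ¬ Decomposable 𝒜) :
    ∀ H ∈ 𝒜, ∀ H' ∈ 𝒜, Relation.ReflTransGen (CircRel 𝒜) H H' := by
  classical
  by_contra hc
  push_neg at hc
  obtain ⟨H₀, hH₀, H₁, hH₁, hnot⟩ := hc
  apply hind
  set cls : Submodule ℝ V → Bool :=
    fun H => decide (Relation.ReflTransGen (CircRel 𝒜) H₀ H) with hclsdef
  have hcls : ∀ C ⊆ 𝒜, IsCircuit C → ∀ H ∈ C, ∀ H' ∈ C, cls H = cls H' := by
    intro C hCA hcirc H hH H' hH'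
    have h1 : CircRel 𝒜 H H' := ⟨C, hCA, hcirc, hH, hH'⟩
    have h2 : CircRel 𝒜 H' H := ⟨C, hCA, hcirc, hH', hH⟩
    rw [hclsdef]
    simp only [decide_eq_decide]
    constructor
    · intro h; exact h.tail h1
    · intro h; exact h.tail h2
  set P := 𝒜.filter (fun H => cls H = true) with hPdef
  set Q := 𝒜.filter (fun H => cls H = false) with hQdef
  refine ⟨2, ![P, Q], le_rfl, ?_, ?_, ?_, ?_⟩
  · intro i
    fin_cases i
    · refine ⟨H₀, Finset.mem_filter.mpr ⟨hH₀, ?_⟩⟩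
      rw [hclsdef]
      simp only [decide_eq_true_eq]
      exact Relation.ReflTransGen.refl
    · refine ⟨H₁, Finset.mem_filter.mpr ⟨hH₁, ?_⟩⟩
      rw [hclsdef]
      simp only [decide_eq_false_iff_not]
      exact hnot
  · intro i j H hi hj
    fin_cases i <;> fin_cases j <;> simp_all
  · intro H
    constructor
    · intro hH
      cases hb : cls H
      · exact ⟨1, Finset.mem_filter.mpr ⟨hH, hb⟩⟩
      · exact ⟨0, Finset.mem_filter.mpr ⟨hH, hb⟩⟩
    · rintro ⟨i, hi⟩
      fin_cases i
      · exact (Finset.mem_filter.mp hi).1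
      · exact (Finset.mem_filter.mp hi).1
  · rw [Fin.sum_univ_two]
    show arrRank 𝒜 = arrRank P + arrRank Q
    exact rank_additive_two hA cls hcls

lemma mem_circuit_of_indecomposable [FiniteDimensional ℝ V] {𝒜 : Finset (Submodule ℝ V)}
    (hA : IsCentralArrangement 𝒜) (hind : ¬ Decomposable 𝒜) (hcard : 2 ≤ 𝒜.card)
    {H : Submodule ℝ V} (hH : H ∈ 𝒜) : ∃ C ⊆ 𝒜, IsCircuit C ∧ H ∈ C := by
  obtain ⟨H', hH', hne⟩ := Finset.exists_mem_ne (s := 𝒜) (by omega) H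
  have hreach := circuit_connected hA hind H hH H' hH'
  rcases Relation.ReflTransGen.cases_head hreach with heq | ⟨H'', hstep, _⟩
  · exact absurd heq.symm hne
  · obtain ⟨C, hCA, hcirc, h1, _⟩ := hstep
    exact ⟨C, hCA, hcirc, h1⟩

end ArrowAux
end AuxSec

namespace ArrowCore

variable {ι : Type*} {m : ℕ}

def NAEin (s : Finset ι) (σ : ι → Bool) : Prop := ∃ i ∈ s, ∃ j ∈ s, σ i ≠ σ j

lemma third_elem {s : Finset ι} (hs : 3 ≤ s.card) (a b : ι) :
    ∃ k ∈ s, k ≠ a ∧ k ≠ b := by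
  classical
  have hcard : 0 < (s \ {a, b}).card := by
    have h1 := Finset.card_sdiff_add_card s {a, b}
    have h2 : ({a, b} : Finset ι).card ≤ 2 :=
      (Finset.card_insert_le a {b}).trans (by simp)
    have h3 : s.card ≤ (s ∪ {a, b}).card := Finset.card_le_card Finset.subset_union_left
    omega
  obtain ⟨k, hk⟩ := Finset.card_pos.mp hcard
  obtain ⟨hks, hknot⟩ := Finset.mem_sdiff.mp hk
  simp only [Finset.mem_insert, Finset.mem_singleton] at hknot
  push_neg at hknot
  exact ⟨k, hks, hknot.1, hknot.2⟩

lemma three_distinct {s : Finset ι} (hs : 3 ≤ s.card) :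
    ∃ x ∈ s, ∃ y ∈ s, ∃ z ∈ s, x ≠ y ∧ x ≠ z ∧ y ≠ z := by
  classical
  have h0 : 0 < s.card := by omega
  obtain ⟨x, hx⟩ := Finset.card_pos.mp h0
  have h1 : 0 < (s.erase x).card := by
    rw [Finset.card_erase_of_mem hx]
    omega
  obtain ⟨y, hy1⟩ := Finset.card_pos.mp h1
  have hy : y ∈ s := Finset.mem_of_mem_erase hy1
  have hyx : y ≠ x := Finset.ne_of_mem_erase hy1
  have h2 : 0 < ((s.erase x).erase y).card := by
    rw [Finset.card_erase_of_mem hy1, Finset.card_erase_of_mem hx]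
    omega
  obtain ⟨z, hz2⟩ := Finset.card_pos.mp h2
  have hz1 : z ∈ s.erase x := Finset.mem_of_mem_erase hz2
  have hz : z ∈ s := Finset.mem_of_mem_erase hz1
  have hzy : z ≠ y := Finset.ne_of_mem_erase hz2
  have hzx : z ≠ x := Finset.ne_of_mem_erase hz1
  exact ⟨x, hx, y, hy, z, hz, hyx.symm, hzx.symm, hzy.symm⟩

section Core

variable (s : Finset ι) (g : ι → (Fin m → Bool) → Bool)

lemma rule2 [DecidableEq ι] (hs : 3 ≤ s.card)
    (huni : ∀ i ∈ s, ∀ b, g i (fun _ => b) = b)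
    (hNAE : ∀ σ : Fin m → ι → Bool, (∀ v, NAEin s (σ v)) →
      NAEin s (fun i => g i (fun v => σ v i)))
    {i j : ι} (hi : i ∈ s) (hj : j ∈ s) (hij : i ≠ j) (β : Bool) (p q : Fin m → Bool)
    (hpq : ∀ v, ¬(p v = β ∧ q v = β)) : ¬(g i p = β ∧ g j q = β) := by
  rintro ⟨hgi, hgj⟩
  set σ : Fin m → ι → Bool := fun v k => if k = i then p v else if k = j then q v else β
    with hσ
  obtain ⟨k₀, hk₀s, hk₀i, hk₀j⟩ := third_elem hs i j
  have hvoter : ∀ v, NAEin s (σ v) := by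
    intro v
    by_cases hp : p v = β
    · have hq : q v ≠ β := fun hq => hpq v ⟨hp, hq⟩
      refine ⟨j, hj, k₀, hk₀s, ?_⟩
      show σ v j ≠ σ v k₀
      rw [hσ]
      simp only [if_neg hij.symm, if_pos rfl, if_neg hk₀i, if_neg hk₀j]
      exact hq
    · refine ⟨i, hi, k₀, hk₀s, ?_⟩
      show σ v i ≠ σ v k₀
      rw [hσ]
      simp only [if_pos rfl, if_neg hk₀i, if_neg hk₀j]
      exact hp
  obtain ⟨i', hi', j', hj', hneq⟩ := hNAE σ hvoter
  have hval : ∀ k ∈ s, g k (fun v => σ v k) = β := by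
    intro k hk
    by_cases h1 : k = i
    · subst h1
      have : (fun v => σ v k) = p := by
        funext v
        rw [hσ]
        simp
      rw [this]
      exact hgi
    · by_cases h2 : k = j
      · subst h2
        have : (fun v => σ v k) = q := by
          funext v
          rw [hσ]
          simp [if_neg h1]
        rw [this]
        exact hgj
      · have : (fun v => σ v k) = fun _ => β := by
          funext v
          rw [hσ]
          simp [if_neg h1, if_neg h2]
        rw [this]
        exact huni k hk β
  exact hneq ((hval i' hi').trans (hval j' hj').symm)

lemma all_eq_neg [DecidableEq ι] (hs : 3 ≤ s.card)
    (huni : ∀ i ∈ s, ∀ b, g i (fun _ => b) = b)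
    (hNAE : ∀ σ : Fin m → ι → Bool, (∀ v, NAEin s (σ v)) →
      NAEin s (fun i => g i (fun v => σ v i)))
    {i j : ι} (hi : i ∈ s) (hj : j ∈ s) (hij : i ≠ j) (p : Fin m → Bool) :
    g j (fun v => !(p v)) = !(g i p) := by
  have h1 := rule2 s g hs huni hNAE hi hj hij true p (fun v => !(p v))
    (by intro v; rintro ⟨h1, h2⟩; rw [h1] at h2; simp at h2)
  have h2 := rule2 s g hs huni hNAE hi hj hij false p (fun v => !(p v))
    (by intro v; rintro ⟨h1, h2⟩; rw [h1] at h2; simp at h2)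
  revert h1 h2
  cases hx : g i p <;> cases hy : g j (fun v => !(p v)) <;> simp_all

lemma all_eq [DecidableEq ι] (hs : 3 ≤ s.card)
    (huni : ∀ i ∈ s, ∀ b, g i (fun _ => b) = b)
    (hNAE : ∀ σ : Fin m → ι → Bool, (∀ v, NAEin s (σ v)) →
      NAEin s (fun i => g i (fun v => σ v i)))
    {i j : ι} (hi : i ∈ s) (hj : j ∈ s) (p : Fin m → Bool) :
    g i p = g j p := by
  by_cases hij : i = j
  · rw [hij]
  · obtain ⟨k, hk, hki, hkj⟩ := third_elem hs i j
    have h1 := all_eq_neg s g hs huni hNAE hi hk (fun h => hki h.symm) p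
    have h2 := all_eq_neg s g hs huni hNAE hj hk (fun h => hkj h.symm) p
    rw [h1] at h2
    exact Bool.not_inj h2

lemma odd_core [DecidableEq ι] (hs : 3 ≤ s.card)
    (huni : ∀ i ∈ s, ∀ b, g i (fun _ => b) = b)
    (hNAE : ∀ σ : Fin m → ι → Bool, (∀ v, NAEin s (σ v)) →
      NAEin s (fun i => g i (fun v => σ v i)))
    {i : ι} (hi : i ∈ s) (p : Fin m → Bool) :
    g i (fun v => !(p v)) = !(g i p) := by
  obtain ⟨k, hk, hki, _⟩ := third_elem hs i i
  have h1 := all_eq_neg s g hs huni hNAE hi hk (fun h => hki h.symm) p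
  have h2 := all_eq s g hs huni hNAE hk hi (fun v => !(p v))
  rw [← h2, h1]

lemma rule3 [DecidableEq ι] (hs : 3 ≤ s.card)
    (huni : ∀ i ∈ s, ∀ b, g i (fun _ => b) = b)
    (hNAE : ∀ σ : Fin m → ι → Bool, (∀ v, NAEin s (σ v)) →
      NAEin s (fun i => g i (fun v => σ v i)))
    {x : ι} (hx : x ∈ s) (p q r : Fin m → Bool)
    (hpqr : ∀ v, ¬(p v = q v ∧ q v = r v)) :
    ¬(g x p = g x q ∧ g x q = g x r) := by
  obtain ⟨x', hx', y', hy', z', hz', hxy', hxz', hyz'⟩ := three_distinct hs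
  rintro ⟨h1, h2⟩
  set σ : Fin m → ι → Bool :=
    fun v k => if k = x' then p v else if k = y' then q v else r v with hσ
  have hvoter : ∀ v, NAEin s (σ v) := by
    intro v
    by_cases hpq : p v = q v
    · have hqr : q v ≠ r v := fun h => hpqr v ⟨hpq, h⟩
      refine ⟨y', hy', z', hz', ?_⟩
      show σ v y' ≠ σ v z'
      rw [hσ]
      simp only [if_neg hxy'.symm, if_pos rfl, if_neg hxz'.symm, if_neg hyz'.symm]
      exact hqr
    · refine ⟨x', hx', y', hy', ?_⟩
      show σ v x' ≠ σ v y'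
      rw [hσ]
      simp only [if_pos rfl, if_neg hxy'.symm]
      exact hpq
  obtain ⟨i', hi', j', hj', hneq⟩ := hNAE σ hvoter
  set β := g x p with hβ
  have hval : ∀ k ∈ s, g k (fun v => σ v k) = β := by
    intro k hk
    by_cases e1 : k = x'
    · subst e1
      have : (fun v => σ v k) = p := by funext v; rw [hσ]; simp
      rw [this]
      exact (all_eq s g hs huni hNAE hk hx p).trans rfl
    · by_cases e2 : k = y'
      · subst e2
        have : (fun v => σ v k) = q := by funext v; rw [hσ]; simp [if_neg e1]
        rw [this]
        rw [all_eq s g hs huni hNAE hk hx q]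
        exact h1.symm
      · have : (fun v => σ v k) = r := by funext v; rw [hσ]; simp [if_neg e1, if_neg e2]
        rw [this]
        rw [all_eq s g hs huni hNAE hk hx r]
        rw [← h2, ← h1]
  exact hneq ((hval i' hi').trans (hval j' hj').symm)

/-- The Arrow-type dictator lemma over `Bool`. -/
lemma arrow_core [DecidableEq ι] (hs : 3 ≤ s.card)
    (huni : ∀ i ∈ s, ∀ b, g i (fun _ => b) = b)
    (hNAE : ∀ σ : Fin m → ι → Bool, (∀ v, NAEin s (σ v)) →
      NAEin s (fun i => g i (fun v => σ v i))) :
    ∃ v₀ : Fin m, ∀ i ∈ s, ∀ p, g i p = p v₀ := by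
  classical
  obtain ⟨x, hx, -⟩ := three_distinct hs
  set h : (Fin m → Bool) → Bool := g x with hh
  have huniv : ∀ b, h (fun _ => b) = b := huni x hx
  have hodd : ∀ p, h (fun v => !(p v)) = !(h p) :=
    fun p => odd_core s g hs huni hNAE hx p
  have hinter : ∀ p q, h p = true → h q = true → h (fun v => p v && q v) = true := by
    intro p q hp hq
    by_contra hc
    have hc' : h (fun v => p v && q v) = false := by
      cases hval : h (fun v => p v && q v)
      · rfl
      · exact absurd hval hc
    have hneg : h (fun v => !(p v && q v)) = true := by
      rw [hodd (fun v => p v && q v), hc']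
      rfl
    refine rule3 s g hs huni hNAE hx p q (fun v => !(p v && q v)) ?_ ⟨?_, ?_⟩
    · intro v
      rintro ⟨e1, e2⟩
      rw [e1] at e2
      cases hq : q v <;> rw [hq] at e2 <;> simp at e2
    · rw [← hh, hp, hq]
    · rw [← hh, hq, hneg]
  have hupward : ∀ p q, (∀ v, p v = true → q v = true) → h p = true → h q = true := by
    intro p q hle hp
    by_contra hc
    have hc' : h q = false := by
      cases hval : h q
      · rfl
      · exact absurd hval hc
    have hnq : h (fun v => !(q v)) = true := by
      rw [hodd q, hc']
      rfl
    have := hinter p (fun v => !(q v)) hp hnq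
    have hfalse : (fun v => p v && !(q v)) = (fun _ : Fin m => false) := by
      funext v
      cases hpv : p v
      · rfl
      · rw [hle v hpv]
        rfl
    rw [hfalse, huniv false] at this
    exact absurd this (by simp)
  by_cases hex : ∃ v₀, h (fun w => decide (w = v₀)) = true
  · obtain ⟨v₀, hv₀⟩ := hex
    refine ⟨v₀, ?_⟩
    intro i hi p
    rw [all_eq s g hs huni hNAE hi hx p]
    show h p = p v₀
    by_cases hp : p v₀ = true
    · rw [hp]
      refine hupward _ p ?_ hv₀
      intro w hw
      rw [decide_eq_true_eq] at hw
      rw [hw, hp]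
    · have hp' : p v₀ = false := by
        cases hval : p v₀
        · rfl
        · exact absurd hval hp
      rw [hp']
      by_contra hc
      have hptrue : h p = true := by
        cases hval : h p
        · rw [hval] at hc; exact absurd rfl hc
        · rfl
      have := hinter p (fun w => decide (w = v₀)) hptrue hv₀
      have hfalse : (fun w => p w && decide (w = v₀)) = (fun _ : Fin m => false) := by
        funext w
        by_cases hw : w = v₀
        · subst hw
          rw [hp']
          rfl
        · simp [hw]
      rw [hfalse, huniv false] at this
      exact absurd this (by simp)
  · exfalso
    push_neg at hex
    have hsing : ∀ v, h (fun w => !(decide (w = v))) = true := by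
      intro v
      have h1 : h (fun w => decide (w = v)) = false := by
        cases hval : h (fun w => decide (w = v))
        · rfl
        · exact absurd hval (hex v)
      rw [hodd (fun w => decide (w = v)), h1]
      rfl
    have hind : ∀ t : Finset (Fin m), h (fun w => decide (w ∉ t)) = true := by
      intro t
      induction t using Finset.induction with
      | empty =>
        have : (fun w : Fin m => decide (w ∉ (∅ : Finset (Fin m)))) = fun _ => true := by
          funext w
          simp
        rw [this]
        exact huniv true
      | @insert v t hvt ih =>
        have heq : (fun w : Fin m => decide (w ∉ insert v t))
            = fun w => (!(decide (w = v))) && decide (w ∉ t) := by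
          funext w
          by_cases h1 : w = v
          · subst h1
            simp
          · by_cases h2 : w ∈ t <;> simp [h1, h2]
        rw [heq]
        exact hinter _ _ (hsing v) ih
    have hfin := hind Finset.univ
    have : (fun w : Fin m => decide (w ∉ Finset.univ)) = fun _ => false := by
      funext w
      simp
    rw [this, huniv false] at hfin
    exact absurd hfin (by simp)

end Core


end ArrowCore


section Glue
variable {V : Type*} [NormedAddCommGroup V] [NormedSpace ℝ V]
namespace ArrowAux
set_option linter.unusedSectionVars false
open Module

/-- Realize an arbitrary non-constant sign pattern on a circuit by a chamber. -/
lemma circuit_realize [FiniteDimensional ℝ V] {𝒜 : Finset (Submodule ℝ V)}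
    (hA : IsCentralArrangement 𝒜) {C : Finset (Submodule ℝ V)} (hCA : C ⊆ 𝒜)
    (hcirc : IsCircuit C) (a : Submodule ℝ V → ℝ) (haC : ∀ H ∈ C, a H ≠ 0)
    (hsum : ∑ H ∈ C, a H • functOf H = 0) (σ : Submodule ℝ V → Bool)
    (hσ : ∃ Ht ∈ C, ∃ Hf ∈ C, σ Ht ≠ σ Hf) :
    ∃ c : Chamber 𝒜, ∀ H ∈ C, (0 < (a H • functOf H) c.pt ↔ σ H = true) := by
  classical
  have hAC : IsCentralArrangement C := fun H hH => hA H (hCA hH)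
  -- get a true-element and a false-element
  obtain ⟨H1, hH1, H2, hH2, hne⟩ := hσ
  have hex : ∃ Ht ∈ C, ∃ Hf ∈ C, σ Ht = true ∧ σ Hf = false := by
    cases h1 : σ H1 <;> cases h2 : σ H2
    · rw [h1, h2] at hne; exact absurd rfl hne
    · exact ⟨H2, hH2, H1, hH1, h2, h1⟩
    · exact ⟨H1, hH1, H2, hH2, h1, h2⟩
    · rw [h1, h2] at hne; exact absurd rfl hne
  obtain ⟨Ht, hHt, H₀, hH₀, hσt, hσ0⟩ := hex
  have htne : Ht ≠ H₀ := by
    rintro rfl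
    rw [hσt] at hσ0
    exact absurd hσ0 (by simp)
  set C' := C.erase H₀ with hC'
  have hC'sub : C' ⊆ C := Finset.erase_subset _ _
  have hC'ne : C' ≠ C := by
    intro h
    have : H₀ ∈ C' := h ▸ hH₀
    exact absurd this (Finset.notMem_erase _ _)
  -- independence of the scaled family on C'
  have hli : LinearIndependent ℝ (fun H : {H // H ∈ C'} => functOf H.1) :=
    circuit_proper_indep hAC hcirc hC'sub hC'ne
  set w : {H // H ∈ C'} → ℝˣ :=
    fun H => Units.mk0 (a H.1) (haC H.1 (hC'sub H.2)) with hw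
  have hli2 : LinearIndependent ℝ (fun H : {H // H ∈ C'} => a H.1 • functOf H.1) := by
    have := hli.units_smul w
    convert this using 1
    funext H
    simp [hw, Units.smul_def]
  -- prescribed values
  set t : {H // H ∈ C'} → ℝ := fun H => if σ H.1 then (C.card : ℝ) else -1 with ht
  obtain ⟨x, hx⟩ := indep_surjective hli2 t
  -- positivity of the sum of t
  have hcard3 : 3 ≤ C.card := circuit_card_three hAC hcirc
  have htsum : (0:ℝ) < ∑ H ∈ C', (if σ H then (C.card : ℝ) else -1) := by
    have hsplit := Finset.sum_filter_add_sum_filter_not C' (fun H => σ H = true)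
      (fun H => if σ H then (C.card : ℝ) else -1)
    set T := C'.filter (fun H => σ H = true) with hT
    set F := C'.filter (fun H => ¬ σ H = true) with hF
    have hTsum : ∑ H ∈ T, (if σ H then (C.card : ℝ) else -1) = T.card * C.card := by
      rw [Finset.sum_congr rfl (fun H hH => if_pos (Finset.mem_filter.mp hH).2)]
      rw [Finset.sum_const, nsmul_eq_mul]
    have hFsum : ∑ H ∈ F, (if σ H then (C.card : ℝ) else -1) = -(F.card : ℝ) := by
      rw [Finset.sum_congr rfl (fun H hH => if_neg (Finset.mem_filter.mp hH).2)]
      rw [Finset.sum_const, nsmul_eq_mul]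
      ring
    have hT1 : 1 ≤ T.card := by
      refine Finset.card_pos.mpr ⟨Ht, Finset.mem_filter.mpr ⟨?_, hσt⟩⟩
      exact Finset.mem_erase.mpr ⟨htne, hHt⟩
    have hFle : F.card ≤ C.card - 1 := by
      calc F.card ≤ C'.card := Finset.card_le_card (Finset.filter_subset _ _)
        _ = C.card - 1 := Finset.card_erase_of_mem hH₀
    rw [← hsplit, hTsum, hFsum]
    have h1 : (1:ℝ) * C.card ≤ T.card * C.card := by
      apply mul_le_mul_of_nonneg_right _ (by positivity)
      exact_mod_cast hT1
    have h2 : (F.card : ℝ) ≤ (C.card : ℝ) - 1 := by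
      have : (F.card : ℝ) ≤ ((C.card - 1 : ℕ) : ℝ) := by exact_mod_cast hFle
      have h3 : ((C.card - 1 : ℕ) : ℝ) = (C.card : ℝ) - 1 := by
        have : 1 ≤ C.card := by omega
        push_cast [this]
        ring
      linarith
    linarith
  -- the value at H₀
  have hx0 : (a H₀ • functOf H₀) x = -(∑ H ∈ C', (if σ H then (C.card : ℝ) else -1)) := by
    have happ : (∑ H ∈ C, a H • functOf H) x = 0 := by rw [hsum]; rfl
    rw [LinearMap.sum_apply] at happ
    have hsplit : (a H₀ • functOf H₀) x + ∑ H ∈ C', (a H • functOf H) x = 0 := by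
      rw [← happ]
      exact Finset.add_sum_erase C (fun H => (a H • functOf H) x) hH₀
    have hvals : ∑ H ∈ C', (a H • functOf H) x
        = ∑ H ∈ C', (if σ H then (C.card : ℝ) else -1) := by
      rw [← Finset.sum_coe_sort C' (fun H => (a H • functOf H) x),
        ← Finset.sum_coe_sort C' (fun H => (if σ H then (C.card : ℝ) else -1))]
      apply Finset.sum_congr rfl
      intro H _
      rw [hx H]
    rw [hvals] at hsplit
    linarith
  -- open set of sign conditions
  set U : Set V := ⋂ H ∈ (C : Set (Submodule ℝ V)),
    {y | if σ H then 0 < (a H • functOf H) y else (a H • functOf H) y < 0} with hU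
  have hUopen : IsOpen U := by
    refine Set.Finite.isOpen_biInter (Finset.finite_toSet C) ?_
    intro H _
    by_cases hb : σ H
    · simp only [if_pos hb]
      exact isOpen_Ioi.preimage (a H • functOf H).continuous_of_finiteDimensional
    · simp only [if_neg hb]
      exact isOpen_Iio.preimage (a H • functOf H).continuous_of_finiteDimensional
  have hxU : x ∈ U := by
    rw [hU]
    refine Set.mem_biInter ?_
    intro H hH
    rw [Finset.mem_coe] at hH
    by_cases hHe : H = H₀
    · subst hHe
      simp only [Set.mem_setOf_eq, if_neg (by rw [hσ0]; simp : ¬ σ H = true)]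
      rw [hx0]
      linarith
    · have hHC' : H ∈ C' := Finset.mem_erase.mpr ⟨hHe, hH⟩
      have := hx ⟨H, hHC'⟩
      simp only [Set.mem_setOf_eq]
      by_cases hb : σ H = true
      · rw [if_pos hb]
        rw [show (a H • functOf H) x = t ⟨H, hHC'⟩ from this, ht]
        simp only [hb, if_true]
        have : (3:ℝ) ≤ (C.card : ℝ) := by exact_mod_cast hcard3
        linarith
      · rw [if_neg hb]
        rw [show (a H • functOf H) x = t ⟨H, hHC'⟩ from this, ht]
        have hb' : σ H = false := by
          cases hval : σ H
          · rfl
          · exact absurd hval hb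
        simp only [hb']
        norm_num
  obtain ⟨z, hzU, hz⟩ := exists_mem_open_complement hA hUopen ⟨x, hxU⟩
  refine ⟨chamberOf 𝒜 hz, ?_⟩
  intro H hH
  have hker : LinearMap.ker (a H • functOf H) = H := by
    rw [LinearMap.ker_smul _ _ (haC H hH), functOf_ker (hA H (hCA hH))]
  have hsign := chamberOf_sign hz (hCA hH) hker
  rw [hsign]
  have hzmem : z ∈ {y | if σ H then 0 < (a H • functOf H) y
      else (a H • functOf H) y < 0} := by
    have := Set.mem_iInter₂.mp hzU H (Finset.mem_coe.mpr hH)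
    exact this
  by_cases hb : σ H = true
  · rw [hb]
    simp only [Set.mem_setOf_eq, if_pos hb] at hzmem
    exact iff_of_true hzmem rfl
  · have hb' : σ H = false := by
      cases hval : σ H
      · rfl
      · exact absurd hval hb
    rw [hb']
    simp only [Set.mem_setOf_eq, if_neg hb] at hzmem
    exact iff_of_false (by linarith) (by simp)


noncomputable def bsign {𝒜 : Finset (Submodule ℝ V)} (f : V →ₗ[ℝ] ℝ) (c : Chamber 𝒜) :
    Bool := decide (0 < f c.pt)

lemma local_aggregator [FiniteDimensional ℝ V] {𝒜 : Finset (Submodule ℝ V)} {m : ℕ}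
    (hA : IsCentralArrangement 𝒜) {Φ : (Fin m → Chamber 𝒜) → Chamber 𝒜}
    (hΦ : Admissible Φ) {H : Submodule ℝ V} (hH : H ∈ 𝒜) {f : V →ₗ[ℝ] ℝ}
    (hker : LinearMap.ker f = H) :
    ∃ h : (Fin m → Bool) → Bool,
      (∀ c : Fin m → Chamber 𝒜, h (fun i => bsign f (c i)) = bsign f (Φ c)) ∧
      (∀ b, h (fun _ => b) = b) := by
  classical
  have hHyp : IsHyperplane H := hA H hH
  obtain ⟨φ, hφ⟩ := hΦ.1 H hH
  -- sections of Chamber {H} with prescribed sign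
  have hsec : ∀ b : Bool, ∃ d : Chamber ({H} : Finset (Submodule ℝ V)),
      (0 < f d.pt ↔ b = true) :=
    fun b => exists_chamber_sign (central_single hHyp) (Finset.mem_singleton_self H) hker b
  choose e he using hsec
  have hbe : ∀ b, bsign (𝒜 := ({H} : Finset (Submodule ℝ V))) f (e b) = b := by
    intro b
    rw [bsign]
    cases b
    · simp only [decide_eq_false_iff_not]
      intro h
      have := (he false).mp h
      exact absurd this (by simp)
    · simp only [decide_eq_true_eq]
      exact (he true).mpr rfl
  have hdet : ∀ d : Chamber ({H} : Finset (Submodule ℝ V)),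
      e (bsign (𝒜 := ({H} : Finset (Submodule ℝ V))) f d) = d := by
    intro d
    rw [chamber_single_eq_iff hHyp _ _ hker]
    by_cases hd : 0 < f d.pt
    · have hb : bsign (𝒜 := ({H} : Finset (Submodule ℝ V))) f d = true := by
        rw [bsign, decide_eq_true_eq]; exact hd
      rw [hb]
      exact iff_of_true ((he true).mpr rfl) hd
    · have hb : bsign (𝒜 := ({H} : Finset (Submodule ℝ V))) f d = false := by
        rw [bsign, decide_eq_false_iff_not]; exact hd
      rw [hb]
      refine iff_of_false ?_ hd
      intro h
      exact absurd ((he false).mp h) (by simp)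
  set h : (Fin m → Bool) → Bool :=
    fun p => bsign (𝒜 := ({H} : Finset (Submodule ℝ V))) f (φ (fun i => e (p i))) with hhdef
  have hkey : ∀ c : Fin m → Chamber 𝒜, h (fun i => bsign f (c i)) = bsign f (Φ c) := by
    intro c
    have heps : ∀ i, e (bsign f (c i)) = epsC H hH (c i) := by
      intro i
      rw [chamber_single_eq_iff hHyp _ _ hker]
      have h1 : 0 < f (epsC H hH (c i)).pt ↔ 0 < f (c i).pt := epsC_sign hH (c i) hker
      have h2 : (0 < f (e (bsign f (c i))).pt ↔ bsign f (c i) = true) := he _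
      rw [h1, h2, bsign, decide_eq_true_eq]
    have : (fun i => e (bsign f (c i))) = fun i => epsC H hH (c i) := funext heps
    rw [hhdef]
    show bsign f (φ (fun i => e (bsign f (c i)))) = bsign f (Φ c)
    rw [this, hφ c]
    rw [bsign, bsign]
    rw [decide_eq_decide]
    exact epsC_sign hH (Φ c) hker
  refine ⟨h, hkey, ?_⟩
  intro b
  obtain ⟨cb, hcb⟩ := exists_chamber_sign hA hH hker b
  have hcbsign : bsign f cb = b := by
    rw [bsign]
    cases b
    · simp only [decide_eq_false_iff_not]
      intro hpos
      exact absurd (hcb.mp hpos) (by simp)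
    · simp only [decide_eq_true_eq]
      exact hcb.mpr rfl
  have h1 : (fun _ : Fin m => b) = fun i => bsign f ((fun _ => cb) i) := by
    funext i
    rw [hcbsign]
  rw [h1, hkey (fun _ => cb), hΦ.2 cb, hcbsign]

lemma circuit_dictator [FiniteDimensional ℝ V] {𝒜 : Finset (Submodule ℝ V)} {m : ℕ}
    (hA : IsCentralArrangement 𝒜) {Φ : (Fin m → Chamber 𝒜) → Chamber 𝒜}
    (hΦ : Admissible Φ) {C : Finset (Submodule ℝ V)} (hCA : C ⊆ 𝒜)
    (hcirc : IsCircuit C) :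
    ∃ v₀ : Fin m, ∀ H ∈ C, ∀ f : V →ₗ[ℝ] ℝ, LinearMap.ker f = H →
      ∀ c : Fin m → Chamber 𝒜, bsign f (Φ c) = bsign f (c v₀) := by
  classical
  have hAC : IsCentralArrangement C := fun H hH => hA H (hCA hH)
  obtain ⟨a, haC, haout, hasum⟩ := circuit_dependence hAC hcirc
  have hkerg : ∀ H ∈ C, LinearMap.ker (a H • functOf H) = H := by
    intro H hH
    rw [LinearMap.ker_smul _ _ (haC H hH), functOf_ker (hAC H hH)]
  have hloc : ∀ H, H ∈ C → ∃ h : (Fin m → Bool) → Bool,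
      (∀ c : Fin m → Chamber 𝒜,
        h (fun i => bsign (a H • functOf H) (c i)) = bsign (a H • functOf H) (Φ c)) ∧
      (∀ b, h (fun _ => b) = b) :=
    fun H hH => local_aggregator hA hΦ (hCA hH) (hkerg H hH)
  choose! G hG1 hG2 using hloc
  have hcard3 : 3 ≤ C.card := circuit_card_three hAC hcirc
  -- NAE condition via realization
  have hNAE : ∀ σ : Fin m → Submodule ℝ V → Bool,
      (∀ v, ArrowCore.NAEin C (σ v)) →
      ArrowCore.NAEin C (fun H => G H (fun v => σ v H)) := by
    intro σ hσ
    have hreal : ∀ v, ∃ c : Chamber 𝒜, ∀ H ∈ C,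
        (0 < (a H • functOf H) c.pt ↔ σ v H = true) := by
      intro v
      obtain ⟨i, hi, j, hj, hij⟩ := hσ v
      exact circuit_realize hA hCA hcirc a haC hasum (σ v) ⟨i, hi, j, hj, hij⟩
    choose cc hcc using hreal
    have hG : ∀ H ∈ C, G H (fun v => σ v H) = bsign (a H • functOf H) (Φ cc) := by
      intro H hH
      have : (fun v => σ v H) = fun v => bsign (a H • functOf H) (cc v) := by
        funext v
        rw [bsign]
        by_cases hb : σ v H = true
        · rw [hb]
          symm
          rw [decide_eq_true_eq]
          exact (hcc v H hH).mpr hb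
        · have hb' : σ v H = false := by
            cases hval : σ v H
            · rfl
            · exact absurd hval hb
          rw [hb']
          symm
          rw [decide_eq_false_iff_not]
          intro hpos
          exact hb ((hcc v H hH).mp hpos)
      rw [this]
      exact hG1 H hH cc
    -- output signs cannot be constant on C
    have hpt : (Φ cc).pt ∈ arrComplement 𝒜 := (Φ cc).pt_mem
    have hne : ∀ H ∈ C, (a H • functOf H) (Φ cc).pt ≠ 0 := by
      intro H hH h0
      exact hpt H (hCA hH) ((hkerg H hH) ▸ LinearMap.mem_ker.mpr h0)
    have happ : ∑ H ∈ C, (a H • functOf H) (Φ cc).pt = 0 := by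
      have : (∑ H ∈ C, a H • functOf H) (Φ cc).pt = 0 := by rw [hasum]; rfl
      rw [LinearMap.sum_apply] at this
      exact this
    by_contra hcon
    rw [ArrowCore.NAEin] at hcon
    push_neg at hcon
    obtain ⟨Hc, hHc⟩ := dependent_nonempty hcirc.1
    have hall : ∀ H ∈ C, bsign (a H • functOf H) (Φ cc)
        = bsign (a Hc • functOf Hc) (Φ cc) := by
      intro H hH
      have h1 := hcon H hH Hc hHc
      rw [hG H hH, hG Hc hHc] at h1
      exact h1
    cases hval : bsign (a Hc • functOf Hc) (Φ cc)
    · -- all negative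
      have hneg : ∀ H ∈ C, (a H • functOf H) (Φ cc).pt < 0 := by
        intro H hH
        have := (hall H hH).trans hval
        rw [bsign, decide_eq_false_iff_not] at this
        rcases lt_or_gt_of_ne (hne H hH) with h | h
        · exact h
        · exact absurd h this
      have : ∑ H ∈ C, (a H • functOf H) (Φ cc).pt < 0 :=
        Finset.sum_neg hneg ⟨Hc, hHc⟩
      linarith
    · have hpos : ∀ H ∈ C, 0 < (a H • functOf H) (Φ cc).pt := by
        intro H hH
        have := (hall H hH).trans hval
        rw [bsign, decide_eq_true_eq] at this
        exact this
      have : 0 < ∑ H ∈ C, (a H • functOf H) (Φ cc).pt :=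
        Finset.sum_pos hpos ⟨Hc, hHc⟩
      linarith
  have huni : ∀ H ∈ C, ∀ b, G H (fun _ => b) = b := fun H hH b => hG2 H hH b
  obtain ⟨v₀, hv₀⟩ := ArrowCore.arrow_core C G hcard3 huni hNAE
  refine ⟨v₀, ?_⟩
  intro H hH f hker c
  have h1 : bsign (a H • functOf H) (Φ c) = bsign (a H • functOf H) (c v₀) := by
    have h2 := hG1 H hH c
    rw [hv₀ H hH (fun i => bsign (a H • functOf H) (c i))] at h2
    exact h2.symm
  -- transfer to f
  have hg0 : (a H • functOf H) ≠ 0 := by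
    intro h0
    have := hkerg H hH
    rw [h0, LinearMap.ker_zero] at this
    obtain ⟨ff, hff, hffker⟩ := hA H (hCA hH)
    rw [← this] at hffker
    exact hff (LinearMap.ker_eq_top.mp hffker)
  have hne1 : (a H • functOf H) (Φ c).pt ≠ 0 :=
    f_pt_ne_zero (Φ c) (hCA hH) (hkerg H hH)
  have hne2 : (a H • functOf H) (c v₀).pt ≠ 0 :=
    f_pt_ne_zero (c v₀) (hCA hH) (hkerg H hH)
  rw [bsign, bsign, decide_eq_decide] at h1 ⊢
  exact sign_iff_congr hg0 ((hkerg H hH).trans hker.symm) hne1 hne2 h1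

end ArrowAux
end Glue


/-- For an admissible map `Φ` on an indecomposable central arrangement with
`|𝒜| ≥ 3` and a fixed chamber `c₀`, there is an index `i₀` such that
`c ↦ Φ(c₀, …, c₀, c, c₀, …, c₀)` (with `c` in the `i₀`-th slot) is the identity
of `Ch(𝒜)`. -/
theorem exists_index_diag_section_id
    {V : Type*} [NormedAddCommGroup V] [NormedSpace ℝ V] [FiniteDimensional ℝ V]
    (𝒜 : Finset (Submodule ℝ V)) (h𝒜 : IsCentralArrangement 𝒜)
    (hcard : 3 ≤ 𝒜.card) (hind : ¬ Decomposable 𝒜)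
    (m : ℕ) (Φ : (Fin m → Chamber 𝒜) → Chamber 𝒜) (hΦ : Admissible Φ)
    (c₀ : Chamber 𝒜) :
    ∃ i₀ : Fin m, ∀ c : Chamber 𝒜,
      Φ (Function.update (fun _ => c₀) i₀ c) = c := by
  classical
  open ArrowAux in
  -- the dictatorship predicate
  let Dict : Submodule ℝ V → Fin m → Prop := fun H v =>
    ∀ f : V →ₗ[ℝ] ℝ, LinearMap.ker f = H →
      ∀ c : Fin m → Chamber 𝒜, ArrowAux.bsign f (Φ c) = ArrowAux.bsign f (c v)
  -- every hyperplane has a dictator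
  have hAny : ∀ H ∈ 𝒜, ∃ v, Dict H v := by
    intro H hH
    obtain ⟨C, hCA, hcirc, hHC⟩ :=
      ArrowAux.mem_circuit_of_indecomposable h𝒜 hind (by omega) hH
    obtain ⟨v₀, hv₀⟩ := ArrowAux.circuit_dictator h𝒜 hΦ hCA hcirc
    exact ⟨v₀, fun f hker c => hv₀ H hHC f hker c⟩
  -- uniqueness of the dictator
  have hUniq : ∀ H ∈ 𝒜, ∀ v v', Dict H v → Dict H v' → v = v' := by
    intro H hH v v' hv hv'
    by_contra hne
    have hHyp := h𝒜 H hH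
    have hker := ArrowAux.functOf_ker hHyp
    obtain ⟨cp, hcp⟩ := ArrowAux.exists_chamber_sign h𝒜 hH hker true
    obtain ⟨cn, hcn⟩ := ArrowAux.exists_chamber_sign h𝒜 hH hker false
    set c : Fin m → Chamber 𝒜 := Function.update (fun _ => cp) v' cn with hc
    have h1 : c v = cp := by
      rw [hc, Function.update_of_ne hne]
    have h2 : c v' = cn := by
      rw [hc, Function.update_self]
    have e1 := hv (ArrowAux.functOf H) hker c
    have e2 := hv' (ArrowAux.functOf H) hker c
    rw [h1] at e1
    rw [h2] at e2
    rw [e1] at e2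
    rw [ArrowAux.bsign, ArrowAux.bsign, decide_eq_decide] at e2
    have hp : 0 < ArrowAux.functOf H cp.pt := hcp.mpr rfl
    have hn := e2.mp hp
    have := hcn.mp hn
    exact absurd this (by simp)
  -- along the circuit relation the dictator is constant
  have hStep : ∀ H H', ArrowAux.CircRel 𝒜 H H' →
      ∀ v v', Dict H v → Dict H' v' → v = v' := by
    intro H H' hrel v v' hv hv'
    obtain ⟨C, hCA, hcirc, hHC, hH'C⟩ := hrel
    obtain ⟨v₀, hv₀⟩ := ArrowAux.circuit_dictator h𝒜 hΦ hCA hcirc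
    have hd1 : Dict H v₀ := fun f hker c => hv₀ H hHC f hker c
    have hd2 : Dict H' v₀ := fun f hker c => hv₀ H' hH'C f hker c
    have e1 := hUniq H (hCA hHC) v v₀ hv hd1
    have e2 := hUniq H' (hCA hH'C) v' v₀ hv' hd2
    rw [e1, e2]
  have hChain : ∀ H H', H ∈ 𝒜 → Relation.ReflTransGen (ArrowAux.CircRel 𝒜) H H' →
      ∀ v v', Dict H v → Dict H' v' → v = v' := by
    intro H H' hH hrtg
    induction hrtg with
    | refl => exact fun v v' hv hv' => hUniq H hH v v' hv hv'
    | @tail M K hHM hMK ih =>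
      intro v v' hv hv'
      obtain ⟨C, hCA, hcirc, hMC, hKC⟩ := hMK
      obtain ⟨v₀, hv₀⟩ := ArrowAux.circuit_dictator h𝒜 hΦ hCA hcirc
      have hdM : Dict M v₀ := fun f hker c => hv₀ M hMC f hker c
      have hdK : Dict K v₀ := fun f hker c => hv₀ K hKC f hker c
      have e1 := ih v v₀ hv hdM
      have e2 := hUniq K (hCA hKC) v' v₀ hv' hdK
      rw [e1, e2]
  -- global dictator
  have hA0 : 0 < 𝒜.card := by omega
  obtain ⟨H₀, hH₀⟩ := Finset.card_pos.mp hA0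
  obtain ⟨v₀, hv₀⟩ := hAny H₀ hH₀
  have hGlobal : ∀ H ∈ 𝒜, Dict H v₀ := by
    intro H hH
    obtain ⟨v, hv⟩ := hAny H hH
    have hreach := ArrowAux.circuit_connected h𝒜 hind H₀ hH₀ H hH
    have := hChain H₀ H hH₀ hreach v₀ v hv₀ hv
    rw [this]
    exact hv
  -- Φ is the projection to v₀
  have hproj : ∀ c : Fin m → Chamber 𝒜, Φ c = c v₀ := by
    intro c
    rw [ArrowAux.chamber_eq_iff h𝒜]
    intro H hH f hker
    have := hGlobal H hH f hker c
    rw [ArrowAux.bsign, ArrowAux.bsign, decide_eq_decide] at this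
    exact this
  refine ⟨v₀, ?_⟩
  intro c
  rw [hproj]
  exact Function.update_self ..
end

section
/- Let 𝒜 be a central hyperplane arrangement in a finite-dimensional real vector space V with |𝒜| ≥ 3. Suppose there is no H ∈ 𝒜 such that 𝒜 = (𝒜 − {H}) ⊎ {H}, i.e. no H ∈ 𝒜 with r(𝒜) = r(𝒜 − {H}) + 1 (this holds in particular when 𝒜 is indecomposable). Then every bijection f : Ch(𝒜) → Ch(𝒜) satisfying IIA other than the identity has Hamming distance at least 2 from the identity; that is, if f ≠ id then there are at least two hyperplanes H ∈ 𝒜 for which the associated map φ_H is the transposition of Ch({H}) rather than the identity. -/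
open Set

section Aux
variable {V : Type*} [NormedAddCommGroup V] [NormedSpace ℝ V]

lemma auxH_zero_of_open {U : Set V} (hU : IsOpen U) (hne : U.Nonempty)
    (g : V →ₗ[ℝ] ℝ) (h : ∀ x ∈ U, g x = 0) : g = 0 := by
  obtain ⟨u, hu⟩ := hne
  obtain ⟨ε, hε, hball⟩ := Metric.isOpen_iff.1 hU u hu
  ext v
  rcases eq_or_ne v 0 with rfl | hv
  · simp
  · have hvn : (0:ℝ) < ‖v‖ := norm_pos_iff.2 hv
    set t : ℝ := ε / (2 * ‖v‖) with ht
    have htpos : 0 < t := div_pos hε (by positivity)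
    have hmem : u + t • v ∈ Metric.ball u ε := by
      rw [Metric.mem_ball, dist_eq_norm]
      have : u + t • v - u = t • v := by abel
      rw [this, norm_smul, Real.norm_eq_abs, abs_of_pos htpos, ht]
      rw [div_mul_eq_mul_div, mul_comm]
      rw [div_lt_iff₀ (by positivity)]
      nlinarith [hvn, hε]
    have h1 := h _ (hball hmem)
    have h2 := h u hu
    simp only [map_add, map_smul, smul_eq_mul, h2, zero_add] at h1
    have := mul_eq_zero.1 h1
    rcases this with h' | h'
    · exact absurd h' htpos.ne'
    · simpa using h'

lemma auxH_avoid (s : Finset (Submodule ℝ V)) (hs : ∀ H ∈ s, IsHyperplane H)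
    {U : Set V} (hU : IsOpen U) (hne : U.Nonempty) [FiniteDimensional ℝ V] :
    ∃ x ∈ U, ∀ H ∈ s, x ∉ H := by
  classical
  induction s using Finset.induction_on generalizing U with
  | empty => obtain ⟨x, hx⟩ := hne; exact ⟨x, hx, by simp⟩
  | insert H s' hHs ih =>
    obtain ⟨g, hg0, hgker⟩ := hs H (Finset.mem_insert_self _ _)
    set U' : Set V := U ∩ {x | g x ≠ 0} with hU'
    have hopen : IsOpen U' :=
      hU.inter (isOpen_ne_fun g.continuous_of_finiteDimensional continuous_const)
    have hne' : U'.Nonempty := by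
      by_contra hcon
      rw [Set.not_nonempty_iff_eq_empty] at hcon
      refine hg0 (auxH_zero_of_open hU hne g fun x hx => ?_)
      by_contra hgx
      have : x ∈ U' := Set.mem_inter hx hgx
      rw [hcon] at this
      exact this
    obtain ⟨x, hxU, hx⟩ := ih (fun H' hH' => hs H' (Finset.mem_insert_of_mem hH')) hopen hne'
    refine ⟨x, hxU.1, fun H' hH' => ?_⟩
    rcases Finset.mem_insert.1 hH' with rfl | hH'
    · intro hmem
      exact hxU.2 (by rwa [← hgker, LinearMap.mem_ker] at hmem)
    · exact hx H' hH'


lemma auxH_sign_const [FiniteDimensional ℝ V] {F : Set V} {x y : V} (g : V →ₗ[ℝ] ℝ)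
    (hF : ∀ z ∈ F, g z ≠ 0) (hx : x ∈ F) (hy : y ∈ connectedComponentIn F x) :
    0 < g x ↔ 0 < g y := by
  have hxc : x ∈ connectedComponentIn F x := mem_connectedComponentIn hx
  have hyF : y ∈ F := connectedComponentIn_subset F x hy
  have hcont : ContinuousOn (fun z => g z) (connectedComponentIn F x) :=
    g.continuous_of_finiteDimensional.continuousOn
  have hpre : IsPreconnected (connectedComponentIn F x) := isPreconnected_connectedComponentIn
  constructor
  · intro hgx
    rcases lt_trichotomy 0 (g y) with h | h | h
    · exact h
    · exact absurd h.symm (hF y hyF)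
    · have h0 : (0:ℝ) ∈ Icc (g y) (g x) := ⟨le_of_lt h, le_of_lt hgx⟩
      obtain ⟨z, hz, hz0⟩ := hpre.intermediate_value hy hxc hcont h0
      exact absurd hz0 (hF z (connectedComponentIn_subset F x hz))
  · intro hgy
    rcases lt_trichotomy 0 (g x) with h | h | h
    · exact h
    · exact absurd h.symm (hF x hx)
    · have h0 : (0:ℝ) ∈ Icc (g x) (g y) := ⟨le_of_lt h, le_of_lt hgy⟩
      obtain ⟨z, hz, hz0⟩ := hpre.intermediate_value hxc hy hcont h0
      exact absurd hz0 (hF z (connectedComponentIn_subset F x hz))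

lemma auxH_same_component {F s : Set V} (hs : Convex ℝ s) (hsF : s ⊆ F)
    {x y : V} (hx : x ∈ s) (hy : y ∈ s) :
    connectedComponentIn F x = connectedComponentIn F y := by
  have h1 : s ⊆ connectedComponentIn F x :=
    hs.isPreconnected.subset_connectedComponentIn hx hsF
  exact connectedComponentIn_eq (h1 hy)

lemma auxH_compl_singleton (H : Submodule ℝ V) :
    arrComplement ({H} : Finset (Submodule ℝ V)) = {x | x ∉ H} := by
  ext x; simp [arrComplement]

lemma auxH_chamber_eq_comp {𝒜 : Finset (Submodule ℝ V)} (c : Chamber 𝒜) :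
    c.1 = connectedComponentIn (arrComplement 𝒜) c.pt := c.2.choose_spec.2

lemma auxH_pt_mem_self {𝒜 : Finset (Submodule ℝ V)} (c : Chamber 𝒜) :
    c.pt ∈ (c.1 : Set V) := by
  rw [auxH_chamber_eq_comp]
  exact mem_connectedComponentIn c.pt_mem

lemma auxH_pt_not_mem {𝒜 : Finset (Submodule ℝ V)} (c : Chamber 𝒜)
    {H : Submodule ℝ V} (hH : H ∈ 𝒜) : c.pt ∉ H := c.pt_mem H hH

lemma auxH_epsC_eq_iff [FiniteDimensional ℝ V] {𝒜 : Finset (Submodule ℝ V)}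
    {H : Submodule ℝ V} (hH : H ∈ 𝒜) {g : V →ₗ[ℝ] ℝ} (hg : LinearMap.ker g = H)
    (c d : Chamber 𝒜) :
    epsC H hH c = epsC H hH d ↔ (0 < g c.pt ↔ 0 < g d.pt) := by
  have hFne : ∀ z ∈ arrComplement ({H} : Finset (Submodule ℝ V)), g z ≠ 0 := by
    intro z hz
    rw [auxH_compl_singleton] at hz
    intro h0
    exact hz (by rw [← hg]; exact LinearMap.mem_ker.2 h0)
  have hcm : ∀ e : Chamber 𝒜, e.pt ∈ arrComplement ({H} : Finset (Submodule ℝ V)) := by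
    intro e
    rw [auxH_compl_singleton]
    exact auxH_pt_not_mem e hH
  constructor
  · intro heq
    have h1 : (epsC H hH c).1 = connectedComponentIn (arrComplement ({H} : Finset (Submodule ℝ V))) c.pt := rfl
    have h2 : (epsC H hH d).1 = connectedComponentIn (arrComplement ({H} : Finset (Submodule ℝ V))) d.pt := rfl
    have : connectedComponentIn (arrComplement ({H} : Finset (Submodule ℝ V))) c.pt
        = connectedComponentIn (arrComplement ({H} : Finset (Submodule ℝ V))) d.pt := by
      rw [← h1, ← h2, heq]
    have hd : d.pt ∈ connectedComponentIn (arrComplement ({H} : Finset (Submodule ℝ V))) c.pt := by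
      rw [this]
      exact mem_connectedComponentIn (hcm d)
    exact auxH_sign_const g hFne (hcm c) hd
  · intro hiff
    apply Subtype.ext
    show connectedComponentIn (arrComplement ({H} : Finset (Submodule ℝ V))) c.pt
        = connectedComponentIn (arrComplement ({H} : Finset (Submodule ℝ V))) d.pt
    have hgc : g c.pt ≠ 0 := hFne _ (hcm c)
    have hgd : g d.pt ≠ 0 := hFne _ (hcm d)
    by_cases hpos : 0 < g c.pt
    · have hdpos : 0 < g d.pt := hiff.1 hpos
      refine auxH_same_component (s := {x | 0 < g x}) ?_ ?_ hpos hdpos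
      · exact convex_halfSpace_gt (LinearMap.isLinear g) 0
      · intro z hz
        rw [auxH_compl_singleton]
        intro hmem
        rw [← hg, LinearMap.mem_ker] at hmem
        exact absurd hmem (by simp only [Set.mem_setOf_eq] at hz; intro h; rw [h] at hz; exact lt_irrefl 0 hz)
    · have hneg : g c.pt < 0 := lt_of_le_of_ne (not_lt.1 hpos) hgc
      have hdneg : g d.pt < 0 := by
        have : ¬ 0 < g d.pt := fun h => hpos (hiff.2 h)
        exact lt_of_le_of_ne (not_lt.1 this) hgd
      refine auxH_same_component (s := {x | g x < 0}) ?_ ?_ hneg hdneg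
      · exact convex_halfSpace_lt (LinearMap.isLinear g) 0
      · intro z hz
        rw [auxH_compl_singleton]
        intro hmem
        rw [← hg, LinearMap.mem_ker] at hmem
        exact absurd hmem (by simp only [Set.mem_setOf_eq] at hz; intro h; rw [h] at hz; exact lt_irrefl 0 hz)

lemma auxH_ne_zero_on_compl {𝒜 : Finset (Submodule ℝ V)} {H : Submodule ℝ V}
    (hH : H ∈ 𝒜) {g : V →ₗ[ℝ] ℝ} (hg : LinearMap.ker g = H) :
    ∀ z ∈ arrComplement 𝒜, g z ≠ 0 := by
  intro z hz h0
  exact hz H hH (by rw [← hg]; exact LinearMap.mem_ker.2 h0)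

lemma auxH_sign_pt [FiniteDimensional ℝ V] {𝒜 : Finset (Submodule ℝ V)}
    {c : Chamber 𝒜} {x : V} (hx : x ∈ arrComplement 𝒜)
    (hc : (c.1 : Set V) = connectedComponentIn (arrComplement 𝒜) x)
    {H : Submodule ℝ V} (hH : H ∈ 𝒜) {g : V →ₗ[ℝ] ℝ} (hg : LinearMap.ker g = H) :
    0 < g c.pt ↔ 0 < g x := by
  have h1 : c.pt ∈ connectedComponentIn (arrComplement 𝒜) x := by
    rw [← hc]; exact auxH_pt_mem_self c
  exact (auxH_sign_const g (auxH_ne_zero_on_compl hH hg) hx h1).symm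

lemma auxH_exists_signs [FiniteDimensional ℝ V] {𝒜 : Finset (Submodule ℝ V)}
    (h𝒜 : IsCentralArrangement 𝒜) {H : Submodule ℝ V} (hH : H ∈ 𝒜)
    {g : V →ₗ[ℝ] ℝ} (hg0 : g ≠ 0) (hg : LinearMap.ker g = H) :
    ∃ cP cN : Chamber 𝒜, 0 < g cP.pt ∧ g cN.pt < 0 := by
  have hcont := g.continuous_of_finiteDimensional
  obtain ⟨v, hv⟩ : ∃ v, g v ≠ 0 := by
    by_contra hcon
    push_neg at hcon
    exact hg0 (by ext w; simpa using hcon w)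
  have hUP : ({x | 0 < g x} : Set V).Nonempty := by
    rcases lt_or_gt_of_ne hv with h | h
    · exact ⟨-v, by simpa using h⟩
    · exact ⟨v, h⟩
  have hUN : ({x | g x < 0} : Set V).Nonempty := by
    rcases lt_or_gt_of_ne hv with h | h
    · exact ⟨v, h⟩
    · exact ⟨-v, by simpa using h⟩
  obtain ⟨xP, hxPU, hxP⟩ := auxH_avoid 𝒜 h𝒜 (isOpen_lt continuous_const hcont) hUP
  obtain ⟨xN, hxNU, hxN⟩ := auxH_avoid 𝒜 h𝒜 (isOpen_lt hcont continuous_const) hUN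
  have hxPc : xP ∈ arrComplement 𝒜 := hxP
  have hxNc : xN ∈ arrComplement 𝒜 := hxN
  set cP : Chamber 𝒜 := ⟨connectedComponentIn (arrComplement 𝒜) xP, ⟨xP, hxPc, rfl⟩⟩ with hcP
  set cN : Chamber 𝒜 := ⟨connectedComponentIn (arrComplement 𝒜) xN, ⟨xN, hxNc, rfl⟩⟩ with hcN
  refine ⟨cP, cN, ?_, ?_⟩
  · exact (auxH_sign_pt (c := cP) hxPc rfl hH hg).2 hxPU
  · have hiff := auxH_sign_pt (c := cN) hxNc rfl hH hg
    have hne := auxH_ne_zero_on_compl hH hg _ (Chamber.pt_mem cN)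
    have hnpos : ¬ 0 < g cN.pt := by
      intro hpos
      exact absurd (hiff.1 hpos) (not_lt.2 (le_of_lt hxNU))
    exact lt_of_le_of_ne (not_lt.1 hnpos) hne

lemma auxH_eps_classify [FiniteDimensional ℝ V] {𝒜 : Finset (Submodule ℝ V)}
    (h𝒜 : IsCentralArrangement 𝒜) {H : Submodule ℝ V} (hH : H ∈ 𝒜) :
    ∃ cP cN : Chamber 𝒜, epsC H hH cP ≠ epsC H hH cN ∧
      ∀ d : Chamber ({H} : Finset (Submodule ℝ V)), d = epsC H hH cP ∨ d = epsC H hH cN := by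
  obtain ⟨g, hg0, hg⟩ := h𝒜 H hH
  obtain ⟨cP, cN, hP, hN⟩ := auxH_exists_signs h𝒜 hH hg0 hg
  have hne : epsC H hH cP ≠ epsC H hH cN := by
    rw [Ne, auxH_epsC_eq_iff hH hg]
    intro hiff
    exact absurd (hiff.1 hP) (not_lt.2 (le_of_lt hN))
  refine ⟨cP, cN, hne, fun d => ?_⟩
  have hd : d.pt ∈ arrComplement ({H} : Finset (Submodule ℝ V)) := d.pt_mem
  have hdH : d.pt ∉ H := by
    rw [auxH_compl_singleton] at hd; exact hd
  have hgd : g d.pt ≠ 0 :=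
    auxH_ne_zero_on_compl (Finset.mem_singleton_self H) hg d.pt d.pt_mem
  have hsub : ∀ (e : Chamber 𝒜), e.pt ∈ arrComplement ({H} : Finset (Submodule ℝ V)) := by
    intro e
    rw [auxH_compl_singleton]
    exact auxH_pt_not_mem e hH
  have hdeq : (d.1 : Set V) = connectedComponentIn (arrComplement ({H} : Finset (Submodule ℝ V))) d.pt :=
    auxH_chamber_eq_comp d
  by_cases hpos : 0 < g d.pt
  · left
    apply Subtype.ext
    rw [hdeq]
    show connectedComponentIn (arrComplement ({H} : Finset (Submodule ℝ V))) d.pt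
      = connectedComponentIn (arrComplement ({H} : Finset (Submodule ℝ V))) cP.pt
    have hPpt : 0 < g cP.pt := hP
    refine auxH_same_component (s := {x | 0 < g x}) (convex_halfSpace_gt (LinearMap.isLinear g) 0)
      ?_ hpos hPpt
    intro z hz
    rw [auxH_compl_singleton]
    intro hmem
    rw [← hg, LinearMap.mem_ker] at hmem
    simp only [Set.mem_setOf_eq, hmem] at hz
    exact lt_irrefl 0 hz
  · right
    apply Subtype.ext
    rw [hdeq]
    show connectedComponentIn (arrComplement ({H} : Finset (Submodule ℝ V))) d.pt
      = connectedComponentIn (arrComplement ({H} : Finset (Submodule ℝ V))) cN.pt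
    have hdneg : g d.pt < 0 := lt_of_le_of_ne (not_lt.1 hpos) hgd
    refine auxH_same_component (s := {x | g x < 0}) (convex_halfSpace_lt (LinearMap.isLinear g) 0)
      ?_ hdneg hN
    intro z hz
    rw [auxH_compl_singleton]
    intro hmem
    rw [← hg, LinearMap.mem_ker] at hmem
    simp only [Set.mem_setOf_eq, hmem] at hz
    exact lt_irrefl 0 hz

lemma auxH_swap_or_triv [FiniteDimensional ℝ V] {𝒜 : Finset (Submodule ℝ V)}
    (h𝒜 : IsCentralArrangement 𝒜) {f : Chamber 𝒜 → Chamber 𝒜}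
    (hsurj : Function.Surjective f) (hIIA : SatisfiesIIAone f)
    {H : Submodule ℝ V} (hH : H ∈ 𝒜) :
    (∃ φ : Chamber ({H} : Finset (Submodule ℝ V)) → Chamber ({H} : Finset (Submodule ℝ V)),
        (∀ c, φ (epsC H hH c) = epsC H hH (f c)) ∧ ∀ d, φ d ≠ d) ∨
    (∀ c, epsC H hH (f c) = epsC H hH c) := by
  obtain ⟨φ, hφ⟩ := hIIA H hH
  obtain ⟨cP, cN, hne, hclass⟩ := auxH_eps_classify h𝒜 hH
  set P := epsC H hH cP with hPdef
  set N := epsC H hH cN with hNdef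
  have hφP : φ P = epsC H hH (f cP) := hφ cP
  have hφN : φ N = epsC H hH (f cN) := hφ cN
  by_cases h1 : φ P = P
  · by_cases h2 : φ N = N
    · right
      intro c
      rcases hclass (epsC H hH c) with hc | hc
      · rw [← hφ c, hc, h1]
      · rw [← hφ c, hc, h2]
    · -- φ N ≠ N, so φ N = P; contradiction with surjectivity
      exfalso
      have hNP : φ N = P := by
        rcases hclass (φ N) with h | h
        · exact h
        · exact absurd h h2
      obtain ⟨c, hc⟩ := hsurj cN
      have : epsC H hH (f c) = P := by
        rw [← hφ c]
        rcases hclass (epsC H hH c) with h | h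
        · rw [h, h1]
        · rw [h, hNP]
      rw [hc] at this
      exact hne this.symm
  · have hPN : φ P = N := by
      rcases hclass (φ P) with h | h
      · exact absurd h h1
      · exact h
    by_cases h2 : φ N = N
    · exfalso
      obtain ⟨c, hc⟩ := hsurj cP
      have : epsC H hH (f c) = N := by
        rw [← hφ c]
        rcases hclass (epsC H hH c) with h | h
        · rw [h, hPN]
        · rw [h, h2]
      rw [hc] at this
      exact hne this
    · left
      have hNP : φ N = P := by
        rcases hclass (φ N) with h | h
        · exact h
        · exact absurd h h2
      refine ⟨φ, fun c => (hφ c), fun d => ?_⟩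
      rcases hclass d with rfl | rfl
      · rw [hPN]; exact hne.symm
      · rw [hNP]; exact hne

lemma auxH_chamber_ext [FiniteDimensional ℝ V] {𝒜 : Finset (Submodule ℝ V)}
    (h𝒜 : IsCentralArrangement 𝒜) {c d : Chamber 𝒜}
    (h : ∀ H (hH : H ∈ 𝒜), epsC H hH c = epsC H hH d) : c = d := by
  classical
  have hfun : ∀ H ∈ 𝒜, ∃ g : V →ₗ[ℝ] ℝ, g ≠ 0 ∧ LinearMap.ker g = H := h𝒜
  choose! g hg0 hgker using hfun
  set s : Set V := ⋂ H ∈ 𝒜, (if 0 < g H c.pt then {x | 0 < g H x} else {x | g H x < 0})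
    with hsdef
  have hconv : Convex ℝ s := by
    refine convex_iInter fun H => convex_iInter fun hH => ?_
    split_ifs
    · exact convex_halfSpace_gt (LinearMap.isLinear (g H)) 0
    · exact convex_halfSpace_lt (LinearMap.isLinear (g H)) 0
  have hsub : s ⊆ arrComplement 𝒜 := by
    intro x hx H hH
    have hx' := Set.mem_iInter₂.1 hx H hH
    intro hmem
    have h0 : g H x = 0 := by
      rw [← hgker H hH, LinearMap.mem_ker] at hmem
      exact hmem
    split_ifs at hx' <;> simp only [Set.mem_setOf_eq, h0] at hx' <;> exact lt_irrefl 0 hx'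
  have hcs : c.pt ∈ s := by
    refine Set.mem_iInter₂.2 fun H hH => ?_
    have hne := auxH_ne_zero_on_compl hH (hgker H hH) c.pt c.pt_mem
    split_ifs with hpos
    · exact hpos
    · exact lt_of_le_of_ne (not_lt.1 hpos) hne
  have hds : d.pt ∈ s := by
    refine Set.mem_iInter₂.2 fun H hH => ?_
    have hne := auxH_ne_zero_on_compl hH (hgker H hH) d.pt d.pt_mem
    have hiff := (auxH_epsC_eq_iff hH (hgker H hH) c d).1 (h H hH)
    split_ifs with hpos
    · exact hiff.1 hpos
    · have : ¬ 0 < g H d.pt := fun hp => hpos (hiff.2 hp)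
      exact lt_of_le_of_ne (not_lt.1 this) hne
  apply Subtype.ext
  rw [auxH_chamber_eq_comp c, auxH_chamber_eq_comp d]
  exact auxH_same_component hconv hsub hcs hds

open Classical in
lemma auxH_inf_erase_le [FiniteDimensional ℝ V] {𝒜 : Finset (Submodule ℝ V)}
    (h𝒜 : IsCentralArrangement 𝒜)
    (hnosplit : ¬ ∃ H ∈ 𝒜, arrRank 𝒜 = arrRank (𝒜.erase H) + 1)
    {H : Submodule ℝ V} (hH : H ∈ 𝒜) :
    (𝒜.erase H).inf id ≤ H := by
  classical
  by_contra hKH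
  apply hnosplit
  refine ⟨H, hH, ?_⟩
  set K := (𝒜.erase H).inf id with hKdef
  obtain ⟨g, hg0, hg⟩ := h𝒜 H hH
  obtain ⟨v, hvK, hvH⟩ := SetLike.not_le_iff_exists.1 hKH
  have hgv : g v ≠ 0 := fun h0 => hvH (by rw [← hg]; exact LinearMap.mem_ker.2 h0)
  set g' : ↥K →ₗ[ℝ] ℝ := g.comp K.subtype with hg'def
  have hrange : LinearMap.range g' = ⊤ := by
    rw [Submodule.eq_top_iff']
    intro x
    have hmem : g v ∈ LinearMap.range g' := ⟨⟨v, hvK⟩, rfl⟩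
    have := Submodule.smul_mem _ (x / g v) hmem
    rwa [smul_eq_mul, div_mul_cancel₀ x hgv] at this
  have hdim : Module.finrank ℝ ↥(LinearMap.ker g') + 1 = Module.finrank ℝ ↥K := by
    have h1 := LinearMap.finrank_range_add_finrank_ker g'
    rw [hrange, finrank_top] at h1
    have : Module.finrank ℝ ℝ = 1 := Module.finrank_self ℝ
    omega
  have hker' : LinearMap.ker g' = Submodule.comap K.subtype (H ⊓ K) := by
    rw [hg'def, LinearMap.ker_comp, hg, Submodule.comap_inf, Submodule.comap_subtype_self]
    simp
  have hdim2 : Module.finrank ℝ ↥(LinearMap.ker g') = Module.finrank ℝ ↥(H ⊓ K) := by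
    rw [hker']
    exact (Submodule.comapSubtypeEquivOfLe (inf_le_right : H ⊓ K ≤ K)).finrank_eq
  have hinf : 𝒜.inf id = H ⊓ K := by
    conv_lhs => rw [← Finset.insert_erase hH]
    rw [Finset.inf_insert]
    rfl
  have hKle : Module.finrank ℝ ↥K ≤ Module.finrank ℝ V := K.finrank_le
  rw [arrRank, arrRank, hinf, ← hKdef]
  omega

lemma auxH_span_rep [FiniteDimensional ℝ V] {ι : Type*} [Fintype ι]
    (L : ι → V →ₗ[ℝ] ℝ) (gg : V →ₗ[ℝ] ℝ)
    (hker : (⨅ j, LinearMap.ker (L j)) ≤ LinearMap.ker gg) :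
    ∃ a : ι → ℝ, gg = ∑ j, a j • L j ∧
      ∃ x : V, ∀ j, a j ≠ 0 → 0 < a j * L j x := by
  classical
  set P : ℕ → Prop := fun k => ∃ a : ι → ℝ, gg = ∑ j, a j • L j ∧
      (Finset.univ.filter fun j => a j ≠ 0).card = k with hPdef
  have hP : ∃ k, P k := by
    obtain ⟨c, hc⟩ := (Submodule.mem_span_range_iff_exists_fun ℝ).1
      (mem_span_of_iInf_ker_le_ker hker)
    exact ⟨_, c, hc.symm, rfl⟩
  obtain ⟨a, hsum, hcard⟩ := Nat.find_spec hP
  set S := Finset.univ.filter fun j => a j ≠ 0 with hSdef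
  have hindep : LinearIndependent ℝ (fun j : {j // a j ≠ 0} => L j.1) := by
    by_contra hdep
    obtain ⟨μ, hμsum, k, hμk⟩ := Fintype.not_linearIndependent_iff.1 hdep
    set μ' : ι → ℝ := Function.extend (Subtype.val : {j // a j ≠ 0} → ι) μ 0 with hμ'def
    have hμ'app : ∀ j : {j // a j ≠ 0}, μ' j.1 = μ j := fun j =>
      Subtype.val_injective.extend_apply μ 0 j
    have hμ'zero : ∀ i, a i = 0 → μ' i = 0 := by
      intro i hi
      rw [hμ'def, Function.extend_apply']
      · rfl
      · rintro ⟨j, rfl⟩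
        exact j.2 hi
    have hz : (∑ i, μ' i • L i) = 0 := by
      have h1 : (∑ i, μ' i • L i) = ∑ i ∈ S, μ' i • L i := by
        refine (Finset.sum_subset (Finset.subset_univ S) fun i _ hi => ?_).symm
        have hai : a i = 0 := by
          by_contra h
          exact hi (Finset.mem_filter.2 ⟨Finset.mem_univ i, h⟩)
        rw [hμ'zero i hai, zero_smul]
      have h2 : (∑ i ∈ S, μ' i • L i) = ∑ j : {j // a j ≠ 0}, μ j • L j.1 := by
        rw [Finset.sum_subtype (p := fun j => a j ≠ 0) S
          (fun i => by simp [hSdef]) (fun i => μ' i • L i)]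
        exact Finset.sum_congr rfl fun j _ => by rw [hμ'app j]
      rw [h1, h2, hμsum]
    set t : ℝ := a k.1 / μ k with htdef
    set a' : ι → ℝ := fun i => a i - t * μ' i with ha'def
    have hsum' : gg = ∑ j, a' j • L j := by
      have : (∑ j, a' j • L j) = (∑ j, a j • L j) - t • ∑ j, μ' j • L j := by
        rw [Finset.smul_sum, ← Finset.sum_sub_distrib]
        refine Finset.sum_congr rfl fun j _ => ?_
        rw [ha'def]
        beta_reduce
        exact (sub_smul (a j) (t * μ' j) (L j)).trans (congrArg _ (mul_smul t (μ' j) (L j)))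
      rw [this, hz, smul_zero, sub_zero, hsum]
    have ha'k : a' k.1 = 0 := by
      show a k.1 - t * μ' k.1 = 0
      rw [hμ'app k, htdef, div_mul_cancel₀ _ hμk, sub_self]
    have hsub : (Finset.univ.filter fun j => a' j ≠ 0) ⊆ S.erase k.1 := by
      intro i hi
      rw [Finset.mem_filter] at hi
      refine Finset.mem_erase.2 ⟨?_, ?_⟩
      · rintro rfl
        exact hi.2 ha'k
      · refine Finset.mem_filter.2 ⟨Finset.mem_univ i, ?_⟩
        intro hai
        apply hi.2
        show a i - t * μ' i = 0
        rw [hai, hμ'zero i hai, mul_zero, sub_zero]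
    have hklt : (Finset.univ.filter fun j => a' j ≠ 0).card < Nat.find hP := by
      calc (Finset.univ.filter fun j => a' j ≠ 0).card
          ≤ (S.erase k.1).card := Finset.card_le_card hsub
        _ < S.card := Finset.card_erase_lt_of_mem
              (Finset.mem_filter.2 ⟨Finset.mem_univ _, k.2⟩)
        _ = Nat.find hP := hcard
    exact absurd (Nat.find_min' hP ⟨a', hsum', rfl⟩) (not_le.2 hklt)
  -- independent functionals: find dual-ish vectors
  have hex : ∀ j : {j // a j ≠ 0}, ∃ w : V,
      (∀ i : {j // a j ≠ 0}, i ≠ j → w ∈ LinearMap.ker (L i.1)) ∧ L j.1 w ≠ 0 := by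
    intro j
    have hnot : ¬ ((⨅ i : {i : {j // a j ≠ 0} // i ≠ j}, LinearMap.ker (L i.1.1))
        ≤ LinearMap.ker (L j.1)) := by
      intro hle
      have hmem := mem_span_of_iInf_ker_le_ker hle
      have hnm := linearIndependent_iff_notMem_span.1 hindep j
      apply hnm
      refine Submodule.span_mono ?_ hmem
      rintro _ ⟨i, rfl⟩
      exact ⟨i.1, ⟨Set.mem_univ _, by simp [i.2]⟩, rfl⟩
    obtain ⟨w, hw1, hw2⟩ := SetLike.not_le_iff_exists.1 hnot
    refine ⟨w, fun i hi => ?_, fun h0 => hw2 (LinearMap.mem_ker.2 h0)⟩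
    exact Submodule.mem_iInf _ |>.1 hw1 ⟨i, hi⟩
  choose w hw1 hw2 using hex
  set x : V := ∑ j : {j // a j ≠ 0}, (a j.1 / L j.1 (w j)) • w j with hxdef
  refine ⟨a, hsum, x, fun j hj => ?_⟩
  have hLx : L j x = a j := by
    rw [hxdef, map_sum]
    rw [Finset.sum_eq_single (⟨j, hj⟩ : {j // a j ≠ 0})]
    · rw [map_smul, smul_eq_mul, div_mul_cancel₀]
      intro h0
      exact hw2 ⟨j, hj⟩ h0
    · intro i _ hi
      rw [map_smul, smul_eq_mul]
      have : L j (w i) = 0 := by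
        have := hw1 i ⟨j, hj⟩ (fun h => hi h.symm) |>.out
        exact LinearMap.mem_ker.1 (hw1 i ⟨j, hj⟩ (fun h => hi h.symm))
      rw [this, mul_zero]
    · intro h
      exact absurd (Finset.mem_univ _) h
  rw [hLx]
  exact mul_self_pos.2 hj

lemma auxH_sign_transfer {a r s : ℝ} (h : 0 < a * r) (hiff : 0 < s ↔ 0 < r) (hs : s ≠ 0) :
    0 < a * s := by
  rcases lt_trichotomy a 0 with ha | ha | ha
  · have hr : r < 0 := by nlinarith
    have h1 : ¬ 0 < s := fun hpos => absurd (hiff.1 hpos) (not_lt.2 hr.le)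
    have h2 : s < 0 := lt_of_le_of_ne (not_lt.1 h1) hs
    exact mul_pos_of_neg_of_neg ha h2
  · rw [ha, zero_mul] at h; exact absurd h (lt_irrefl 0)
  · have hr : 0 < r := by nlinarith
    exact mul_pos ha (hiff.2 hr)

end Aux


open Classical in
/-- If `|𝒜| ≥ 3` and no `H ∈ 𝒜` satisfies `𝒜 = (𝒜 − {H}) ⊎ {H}` (i.e. no `H`
with `r(𝒜) = r(𝒜 − {H}) + 1`; in particular if `𝒜` is indecomposable), then
every bijection `f : Ch(𝒜) → Ch(𝒜)` satisfying IIA other than the identity is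
at Hamming distance at least `2` from the identity: at least two hyperplanes
`H ∈ 𝒜` have associated map `φ_H` equal to the transposition of `Ch({H})`. -/
theorem hamming_distance_from_id_ge_two
    {V : Type*} [NormedAddCommGroup V] [NormedSpace ℝ V] [FiniteDimensional ℝ V]
    (𝒜 : Finset (Submodule ℝ V)) (h𝒜 : IsCentralArrangement 𝒜)
    (hcard : 3 ≤ 𝒜.card)
    (hnosplit : ¬ ∃ H ∈ 𝒜, arrRank 𝒜 = arrRank (𝒜.erase H) + 1)
    (f : Chamber 𝒜 → Chamber 𝒜) (hbij : Function.Bijective f)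
    (hIIA : SatisfiesIIAone f) (hne : f ≠ id) :
    ∃ (H₁ : Submodule ℝ V) (hH₁ : H₁ ∈ 𝒜) (H₂ : Submodule ℝ V) (hH₂ : H₂ ∈ 𝒜),
      H₁ ≠ H₂ ∧
      (∃ φ : Chamber ({H₁} : Finset (Submodule ℝ V)) →
             Chamber ({H₁} : Finset (Submodule ℝ V)),
        (∀ c : Chamber 𝒜, φ (epsC H₁ hH₁ c) = epsC H₁ hH₁ (f c)) ∧
        ∀ d, φ d ≠ d) ∧
      (∃ φ : Chamber ({H₂} : Finset (Submodule ℝ V)) →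
             Chamber ({H₂} : Finset (Submodule ℝ V)),
        (∀ c : Chamber 𝒜, φ (epsC H₂ hH₂ c) = epsC H₂ hH₂ (f c)) ∧
        ∀ d, φ d ≠ d) := by
  classical
  obtain ⟨c₀, hc₀⟩ : ∃ c₀, f c₀ ≠ c₀ := by
    by_contra h
    push_neg at h
    exact hne (funext fun c => h c)
  obtain ⟨H₁, hH₁, hswapped⟩ :
      ∃ H₁, ∃ hH₁ : H₁ ∈ 𝒜, epsC H₁ hH₁ (f c₀) ≠ epsC H₁ hH₁ c₀ := by
    by_contra h
    push_neg at h
    exact hc₀ (auxH_chamber_ext h𝒜 fun H hH => h H hH)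
  have hφ₁ : ∃ φ : Chamber ({H₁} : Finset (Submodule ℝ V)) →
      Chamber ({H₁} : Finset (Submodule ℝ V)),
      (∀ c, φ (epsC H₁ hH₁ c) = epsC H₁ hH₁ (f c)) ∧ ∀ d, φ d ≠ d := by
    rcases auxH_swap_or_triv h𝒜 hbij.2 hIIA hH₁ with h | h
    · exact h
    · exact absurd (h c₀) hswapped
  by_contra hgoal
  have htriv : ∀ H (hH : H ∈ 𝒜), H ≠ H₁ → ∀ c, epsC H hH (f c) = epsC H hH c := by
    intro H hH hne2
    rcases auxH_swap_or_triv h𝒜 hbij.2 hIIA hH with h | h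
    · exact absurd ⟨H₁, hH₁, H, hH, hne2.symm, hφ₁, h⟩ hgoal
    · exact h
  obtain ⟨φ₁, hφ₁i, hφ₁s⟩ := hφ₁
  have hswapAll : ∀ c, epsC H₁ hH₁ (f c) ≠ epsC H₁ hH₁ c := by
    intro c
    rw [← hφ₁i c]
    exact hφ₁s _
  obtain ⟨g₁, hg₁0, hg₁⟩ := h𝒜 H₁ hH₁
  set ℬ := 𝒜.erase H₁ with hℬ
  have hinf : ℬ.inf id ≤ H₁ := auxH_inf_erase_le h𝒜 hnosplit hH₁
  have hfun : ∀ j : {H // H ∈ ℬ}, ∃ g : V →ₗ[ℝ] ℝ, g ≠ 0 ∧ LinearMap.ker g = j.1 :=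
    fun j => h𝒜 j.1 (Finset.mem_of_mem_erase j.2)
  choose L hL0 hLker using hfun
  have hker : (⨅ j : {H // H ∈ ℬ}, LinearMap.ker (L j)) ≤ LinearMap.ker g₁ := by
    rw [hg₁]
    refine le_trans (Finset.le_inf fun H hHb => ?_) hinf
    exact le_trans (iInf_le _ ⟨H, hHb⟩) (le_of_eq (hLker ⟨H, hHb⟩))
  obtain ⟨a, hsum, x₀, hx₀⟩ := auxH_span_rep L g₁ hker
  set U : Set V := ⋂ j : {H // H ∈ ℬ}, {x | a j ≠ 0 → 0 < a j * L j x} with hU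
  have hUopen : IsOpen U := by
    refine isOpen_iInter_of_finite fun j => ?_
    by_cases h : a j = 0
    · have heq : {x : V | a j ≠ 0 → 0 < a j * L j x} = Set.univ := by
        ext x; simp [h]
      rw [heq]; exact isOpen_univ
    · have heq : {x : V | a j ≠ 0 → 0 < a j * L j x} = {x | 0 < a j * L j x} := by
        ext x; simp [h]
      rw [heq]
      exact isOpen_lt continuous_const
        (continuous_const.mul (L j).continuous_of_finiteDimensional)
  have hUne : U.Nonempty := ⟨x₀, Set.mem_iInter.2 fun j hj => hx₀ j hj⟩
  obtain ⟨x, hxU, hxC⟩ := auxH_avoid 𝒜 h𝒜 hUopen hUne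
  have hxC' : x ∈ arrComplement 𝒜 := hxC
  set c : Chamber 𝒜 := ⟨connectedComponentIn (arrComplement 𝒜) x, ⟨x, hxC', rfl⟩⟩ with hc
  have hsignc : ∀ j : {H // H ∈ ℬ}, (0 < L j c.pt ↔ 0 < L j x) :=
    fun j => auxH_sign_pt hxC' rfl (Finset.mem_of_mem_erase j.2) (hLker j)
  have hcne : ∀ j : {H // H ∈ ℬ}, L j c.pt ≠ 0 := fun j =>
    auxH_ne_zero_on_compl (Finset.mem_of_mem_erase j.2) (hLker j) c.pt c.pt_mem
  have hdne : ∀ j : {H // H ∈ ℬ}, L j (f c).pt ≠ 0 := fun j =>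
    auxH_ne_zero_on_compl (Finset.mem_of_mem_erase j.2) (hLker j) (f c).pt (f c).pt_mem
  have hsigncd : ∀ j : {H // H ∈ ℬ}, (0 < L j (f c).pt ↔ 0 < L j c.pt) := by
    intro j
    have h := htriv j.1 (Finset.mem_of_mem_erase j.2) (Finset.ne_of_mem_erase j.2) c
    exact (auxH_epsC_eq_iff (Finset.mem_of_mem_erase j.2) (hLker j) (f c) c).1 h
  have htermc : ∀ j : {H // H ∈ ℬ}, 0 ≤ a j * L j c.pt := by
    intro j
    by_cases hj : a j = 0
    · rw [hj, zero_mul]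
    · have hxj : 0 < a j * L j x := Set.mem_iInter.1 hxU j hj
      exact le_of_lt (auxH_sign_transfer hxj (hsignc j) (hcne j))
  have htermd : ∀ j : {H // H ∈ ℬ}, 0 ≤ a j * L j (f c).pt := by
    intro j
    by_cases hj : a j = 0
    · rw [hj, zero_mul]
    · have hxj : 0 < a j * L j x := Set.mem_iInter.1 hxU j hj
      have h1 := auxH_sign_transfer hxj (hsignc j) (hcne j)
      exact le_of_lt (auxH_sign_transfer h1 (hsigncd j) (hdne j))
  have happ : ∀ y, g₁ y = ∑ j : {H // H ∈ ℬ}, a j * L j y := by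
    intro y
    have h := LinearMap.congr_fun hsum y
    simpa using h
  have hgc : 0 < g₁ c.pt := by
    have hnn : 0 ≤ g₁ c.pt := by
      rw [happ]
      exact Finset.sum_nonneg fun j _ => htermc j
    exact lt_of_le_of_ne hnn
      (Ne.symm (auxH_ne_zero_on_compl hH₁ hg₁ c.pt c.pt_mem))
  have hgd : 0 < g₁ (f c).pt := by
    have hnn : 0 ≤ g₁ (f c).pt := by
      rw [happ]
      exact Finset.sum_nonneg fun j _ => htermd j
    exact lt_of_le_of_ne hnn
      (Ne.symm (auxH_ne_zero_on_compl hH₁ hg₁ (f c).pt (f c).pt_mem))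
  exact hswapAll c ((auxH_epsC_eq_iff hH₁ hg₁ (f c) c).2 (iff_of_true hgd hgc))
end
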